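/- arXiv:quant-ph/0503066 — 10 statements merged into one kernel-verified Lean document; each statement's English description precedes it below -/
import Mathlib

section
/- Let Ω be a finite set and ⪯ a weak order (reflexive, transitive, complete) over subsets of Ω. Then there exists a finitely additive probability measure μ on Ω such that A ⪯ B iff μ(A) ≤ μ(B) for all A, B ⊆ Ω, if and only if: (1) ∅ ⪯ A for every A ⊆ Ω; (2) ∅ ≺ Ω; (3) for every n, if A₁,…,Aₙ,B₁,…,Bₙ are subsets with ∑ᵢ 1_{Aᵢ} = ∑ᵢ 1_{Bᵢ} (as functions Ω → ℕ) and Aᵢ ⪯ Bᵢ for each i, then Aᵢ ∼ Bᵢ for each i. -/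
open Finset

section Helpers

variable {ι : Type*} [Fintype ι]

/-- membership in the cone generated by a list of vectors -/
def InCone (L : List (ι → ℚ)) (y : ι → ℚ) : Prop :=
  ∃ c : Fin L.length → ℚ, (∀ i, 0 ≤ c i) ∧ y = ∑ i, c i • L.get i

lemma inCone_of_tail {v : ι → ℚ} {L : List (ι → ℚ)} {y : ι → ℚ}
    (h : InCone L y) : InCone (v :: L) y := by
  obtain ⟨c, hc, rfl⟩ := h
  refine ⟨Fin.cases 0 c, ?_, ?_⟩
  · intro i; induction i using Fin.cases <;> simp [hc]
  · show _ = ∑ i : Fin (L.length + 1), _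
    rw [Fin.sum_univ_succ]; simp

set_option linter.unusedSectionVars false in
theorem farkas : ∀ n : ℕ, ∀ L : List (ι → ℚ), L.length = n → ∀ y : ι → ℚ,
    ¬ InCone L y →
    ∃ f : (ι → ℚ) →ₗ[ℚ] ℚ, (∀ v ∈ L, 0 ≤ f v) ∧ f y < 0 := by
  intro n
  induction n using Nat.strong_induction_on with
  | _ n ih =>
    intro L hL y hy
    match n, L, hL with
    | _, [], rfl =>
      have hy0 : y ≠ 0 := by
        intro h; exact hy ⟨Fin.elim0, fun i => i.elim0, by simp [h]⟩
      obtain ⟨j, hj⟩ := Function.ne_iff.mp hy0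
      refine ⟨(-(y j)) • LinearMap.proj j, by simp, ?_⟩
      simp only [LinearMap.smul_apply, LinearMap.proj_apply, smul_eq_mul]
      have h2 : (0:ℚ) < y j * y j := mul_self_pos.mpr hj
      linarith
    | _, v :: L', rfl =>
      have hyL' : ¬ InCone L' y := fun h => hy (inCone_of_tail h)
      obtain ⟨f, hf, hfy⟩ := ih L'.length (by simp) L' rfl y hyL'
      by_cases hfv : 0 ≤ f v
      · refine ⟨f, ?_, hfy⟩
        intro u hu
        rcases List.mem_cons.mp hu with rfl | hu
        · exact hfv
        · exact hf u hu
      push_neg at hfv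
      -- transformed list
      set φ : (ι → ℚ) → (ι → ℚ) := fun u => f v • u - f u • v with hφ
      set L'' : List (ι → ℚ) := L'.map φ with hL''
      have hlen : L''.length = L'.length := by simp [hL'']
      have hy'' : ¬ InCone L'' (f v • y - f y • v) := by
        rintro ⟨c, hc, hsum⟩
        apply hy
        -- reconstruct coefficients for v :: L'
        have hget : ∀ i : Fin L''.length, L''.get i = φ (L'.get (Fin.cast hlen i)) := by
          intro i; simp [hL'']
        set c' : Fin L'.length → ℚ := fun i => c (Fin.cast hlen.symm i) with hc'
        have hsum2 : f v • y - f y • v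
            = f v • (∑ i, c' i • L'.get i) - (∑ i, c' i * f (L'.get i)) • v := by
          rw [hsum, Finset.smul_sum, Finset.sum_smul, ← Finset.sum_sub_distrib]
          refine Fintype.sum_equiv (finCongr hlen) _ _ ?_
          intro i
          rw [hget i]
          have hcc : c' (finCongr hlen i) = c i := rfl
          rw [hcc, hφ]
          simp only [smul_sub, smul_smul]
          rw [mul_comm (c i) (f v), mul_comm (f v) (c i)]
          rfl
        have hκ : 0 ≤ (f y - ∑ i, c' i * f (L'.get i)) / f v := by
          have : 0 ≤ ∑ i, c' i * f (L'.get i) :=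
            Finset.sum_nonneg fun i _ => mul_nonneg (hc _) (hf _ (L'.get_mem i))
          exact div_nonneg_iff.mpr (Or.inr ⟨by linarith, le_of_lt hfv⟩)
        refine ⟨Fin.cases ((f y - ∑ i, c' i * f (L'.get i)) / f v) c', ?_, ?_⟩
        · intro i; induction i using Fin.cases with
          | zero => exact hκ
          | succ i => exact hc _
        · show y = ∑ i : Fin (L'.length + 1), _
          rw [Fin.sum_univ_succ]
          simp only [Fin.cases_zero, Fin.cases_succ, List.get]
          have hfv0 : f v ≠ 0 := ne_of_lt hfv
          have this2 := hsum2
          apply smul_right_injective (ι → ℚ) hfv0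
          show f v • y = f v • (((f y - ∑ i, c' i * f (L'.get i)) / f v) • v
              + ∑ x : Fin L'.length, c' x • L'.get x)
          have hdiv : f v • (((f y - ∑ i, c' i * f (L'.get i)) / f v) • v)
              = (f y - ∑ i, c' i * f (L'.get i)) • v := by
            rw [smul_smul, mul_div_cancel₀ _ hfv0]
          rw [smul_add, hdiv]
          rw [sub_eq_iff_eq_add] at this2
          rw [this2, sub_smul]
          abel
      obtain ⟨h, hh, hhy⟩ := ih L''.length (by simpa [hlen]) L'' rfl _ hy''
      refine ⟨f v • h - h v • f, ?_, ?_⟩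
      · intro u hu
        rcases List.mem_cons.mp hu with rfl | hu
        · simp [mul_comm]
        · have := hh (φ u) (List.mem_map_of_mem (f := φ) hu)
          simpa [hφ, map_sub, map_smul, smul_eq_mul, mul_comm] using this
      · have := hhy
        simp only [map_sub, map_smul, smul_eq_mul] at this ⊢
        simp only [LinearMap.sub_apply, LinearMap.smul_apply, smul_eq_mul]
        linarith [this]

lemma sum_fin_get_map {α M : Type*} [AddCommMonoid M] (l : List α) (f : α → M) :
    ∑ i : Fin l.length, f (l.get i) = (l.map f).sum := by
  rw [Fin.sum_univ_def]
  congr 1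
  rw [show (fun i => f (l.get i)) = f ∘ l.get from rfl, ← List.map_map, List.map_get_finRange]

lemma ind_cast {Ω : Type*} (A : Set Ω) (ω : Ω) :
    A.indicator (fun _ => (1:ℚ)) ω = ((A.indicator (fun _ => (1:ℕ)) ω : ℕ) : ℚ) := by
  classical
  by_cases h : ω ∈ A <;> simp [Set.indicator, h]

lemma ind_cast_real {Ω : Type*} (A : Set Ω) (ω : Ω) :
    A.indicator (fun _ => (1:ℝ)) ω = ((A.indicator (fun _ => (1:ℕ)) ω : ℕ) : ℝ) := by
  classical
  by_cases h : ω ∈ A <;> simp [Set.indicator, h]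

lemma mu_atoms {Ω : Type*} [Fintype Ω] (μ : Set Ω → ℝ)
    (hadd : ∀ A B : Set Ω, Disjoint A B → μ (A ∪ B) = μ A + μ B) (A : Set Ω) :
    μ A = ∑ ω : Ω, A.indicator (fun _ => (1:ℝ)) ω * μ {ω} := by
  classical
  have h0 : μ ∅ = 0 := by
    have := hadd ∅ ∅ (by simp)
    simpa using this
  have key : ∀ s : Finset Ω, μ ↑s = ∑ ω ∈ s, μ {ω} := by
    intro s
    induction s using Finset.induction_on with
    | empty => simpa using h0
    | @insert a s ha ih =>
      rw [Finset.sum_insert ha, ← ih]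
      have hins : (↑(insert a s) : Set Ω) = {a} ∪ ↑s := by
        rw [Finset.coe_insert, Set.insert_eq]
      rw [hins, hadd _ _ (Set.disjoint_singleton_left.mpr (by simpa using ha))]
  have hA : A = ↑(A.toFinset) := by simp
  rw [hA, key]
  symm
  have hterm : ∀ ω : Ω, (↑A.toFinset : Set Ω).indicator (fun _ => (1:ℝ)) ω * μ {ω}
      = if ω ∈ A.toFinset then μ {ω} else 0 := by
    intro ω; by_cases h : ω ∈ A
      <;> simp [Set.indicator, h, Set.mem_toFinset, Set.coe_toFinset]
  rw [Finset.sum_congr rfl (fun ω _ => hterm ω), Finset.sum_ite_mem, Finset.univ_inter]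

end Helpers


/-- A weak order on subsets of a finite set is represented by a
finitely additive probability measure iff it satisfies positivity,
non-triviality and the cancelation condition. -/
theorem stmt0 {Ω : Type*} [Fintype Ω] (le : Set Ω → Set Ω → Prop)
    (hrefl : ∀ A, le A A)
    (htrans : ∀ A B C, le A B → le B C → le A C)
    (htotal : ∀ A B, le A B ∨ le B A) :
    (∃ μ : Set Ω → ℝ,
      (∀ A, 0 ≤ μ A) ∧ μ Set.univ = 1 ∧
      (∀ A B : Set Ω, Disjoint A B → μ (A ∪ B) = μ A + μ B) ∧
      (∀ A B : Set Ω, le A B ↔ μ A ≤ μ B)) ↔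
    ((∀ A : Set Ω, le ∅ A) ∧
     (le ∅ Set.univ ∧ ¬ le Set.univ ∅) ∧
     (∀ n : ℕ, ∀ A B : Fin n → Set Ω,
       (∀ ω : Ω, ∑ i, (A i).indicator (fun _ => (1 : ℕ)) ω
           = ∑ i, (B i).indicator (fun _ => (1 : ℕ)) ω) →
       (∀ i, le (A i) (B i)) →
       ∀ i, le (A i) (B i) ∧ le (B i) (A i))) := by
  classical
  constructor
  · -- forward direction
    rintro ⟨μ, hpos, hone, hadd, hrep⟩
    have matoms := mu_atoms μ hadd
    have h0 : μ ∅ = 0 := by have := hadd ∅ ∅ (by simp); simpa using this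
    refine ⟨fun A => (hrep _ _).mpr (h0 ▸ hpos A), ⟨(hrep _ _).mpr (by rw [h0, hone]; norm_num),
      fun h => by have := (hrep _ _).mp h; rw [h0, hone] at this; norm_num at this⟩, ?_⟩
    intro n A B hind hle
    have hsum : ∑ i, μ (A i) = ∑ i, μ (B i) := by
      have key : ∀ C : Fin n → Set Ω, ∑ i, μ (C i)
          = ∑ ω : Ω, ((∑ i, (C i).indicator (fun _ => (1:ℕ)) ω : ℕ) : ℝ) * μ {ω} := by
        intro C
        rw [Finset.sum_congr rfl (fun i _ => matoms (C i)), Finset.sum_comm]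
        refine Finset.sum_congr rfl fun ω _ => ?_
        rw [← Finset.sum_mul]
        push_cast
        rw [Finset.sum_congr rfl fun i _ => ind_cast_real (C i) ω]
      rw [key A, key B]
      exact Finset.sum_congr rfl fun ω _ => by rw [hind ω]
    have heq : ∀ i, μ (A i) = μ (B i) := by
      have := (Finset.sum_eq_sum_iff_of_le (fun i _ => (hrep _ _).mp (hle i))).mp hsum
      exact fun i => this i (Finset.mem_univ i)
    exact fun i => ⟨hle i, (hrep _ _).mpr (heq i).ge⟩
  · -- backward direction
    rintro ⟨hposi, ⟨hα, hβ⟩, hcanc⟩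
    set χ : Set Ω → Ω → ℚ := fun A ω => A.indicator (fun _ => (1:ℚ)) ω with hχ
    set ext : Set Ω → (Option Ω → ℚ) := fun A o => o.elim 0 (χ A) with hext
    set vp : Set Ω × Set Ω → (Option Ω → ℚ) :=
      fun p o => o.elim (if le p.2 p.1 then 0 else 1) (fun ω => χ p.2 ω - χ p.1 ω) with hvpdef
    set y : Option Ω → ℚ := fun o => o.elim 1 (fun _ => 0) with hydef
    set P : List (Set Ω × Set Ω) :=
      (Finset.univ.filter fun p : Set Ω × Set Ω => le p.1 p.2).toList with hPdef
    have hmemP : ∀ p ∈ P, le p.1 p.2 := by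
      intro p hp
      rw [hPdef, Finset.mem_toList, Finset.mem_filter] at hp
      exact hp.2
    have hPmem : ∀ p : Set Ω × Set Ω, le p.1 p.2 → p ∈ P := by
      intro p hp
      rw [hPdef, Finset.mem_toList, Finset.mem_filter]
      exact ⟨Finset.mem_univ _, hp⟩
    -- step A: y is not in the cone
    have hnc : ¬ InCone (P.map vp) y := by
      rintro ⟨c, hc, hsum⟩
      set k := P.length with hk
      have hlen : (P.map vp).length = k := by simp [hk]
      set q : Fin k → ℚ := fun i => c (Fin.cast hlen.symm i) with hqdef
      have hq : ∀ i, 0 ≤ q i := fun i => hc _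
      have hy : y = ∑ i : Fin k, q i • vp (P.get i) := by
        rw [hsum]
        refine Fintype.sum_equiv (finCongr hlen) _ _ fun i => ?_
        have h1 : (P.map vp).get i = vp (P.get (Fin.cast (by simp) i)) := by simp
        rw [h1]
        rfl
      have hnone : (1:ℚ) = ∑ i : Fin k,
          q i * (if le (P.get i).2 (P.get i).1 then 0 else 1) := by
        have h2 := congrFun hy none
        simpa [hydef, Finset.sum_apply, hvpdef] using h2
      have hω : ∀ ω : Ω, (0:ℚ) = ∑ i : Fin k,
          q i * (χ (P.get i).2 ω - χ (P.get i).1 ω) := by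
        intro ω
        have h2 := congrFun hy (some ω)
        simpa [hydef, Finset.sum_apply, hvpdef] using h2
      set N : ℕ := ∏ i : Fin k, (q i).den with hNdef
      have hN : 0 < N := Finset.prod_pos fun i _ => (q i).pos
      set m : Fin k → ℕ := fun i => (q i * N).num.toNat with hmdef
      have hm : ∀ i, (m i : ℚ) = q i * N := by
        intro i
        obtain ⟨t, ht⟩ := Finset.dvd_prod_of_mem (fun i => (q i).den) (Finset.mem_univ i)
        have hint : q i * N = (((q i).num * t : ℤ) : ℚ) := by
          rw [← hNdef] at ht
          rw [ht]
          push_cast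
          rw [← mul_assoc]
          congr 1
          exact_mod_cast Rat.mul_den_eq_num (q i)
        have hnonneg : (0:ℚ) ≤ q i * N := mul_nonneg (hq i) (by positivity)
        have hge : 0 ≤ (q i * N).num := Rat.num_nonneg.mpr hnonneg
        calc (m i : ℚ) = (((q i * N).num.toNat : ℤ) : ℚ) := by norm_cast
        _ = (((q i * N).num : ℤ) : ℚ) := by rw [Int.toNat_of_nonneg hge]
        _ = q i * N := by rw [hint, Rat.num_intCast]
      -- find strict index with positive coefficient
      have hNsum : (N:ℚ) = ∑ i : Fin k,
          (m i : ℚ) * (if le (P.get i).2 (P.get i).1 then 0 else 1) := by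
        calc (N:ℚ) = N * 1 := by ring
        _ = N * ∑ i : Fin k, q i * (if le (P.get i).2 (P.get i).1 then 0 else 1) := by
              rw [← hnone]
        _ = ∑ i : Fin k, (m i : ℚ) * (if le (P.get i).2 (P.get i).1 then 0 else 1) := by
              rw [Finset.mul_sum]
              exact Finset.sum_congr rfl fun i _ => by rw [hm]; ring
      have hex : ∃ i : Fin k, m i ≠ 0 ∧ ¬ le (P.get i).2 (P.get i).1 := by
        by_contra hno
        push_neg at hno
        have hz : ∀ i : Fin k,
            (m i : ℚ) * (if le (P.get i).2 (P.get i).1 then 0 else 1) = 0 := by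
          intro i
          by_cases hl : le (P.get i).2 (P.get i).1
          · rw [if_pos hl, mul_zero]
          · have hzero : m i = 0 := by
              by_contra h
              exact hl (hno i h)
            simp [hzero]
        rw [Finset.sum_congr rfl fun i _ => hz i] at hNsum
        simp at hNsum
        omega
      obtain ⟨i₀, hm0, hstr⟩ := hex
      -- natural number equation
      have hEq : ∀ ω : Ω, ∑ i : Fin k, m i * (P.get i).1.indicator (fun _ => (1:ℕ)) ω
          = ∑ i : Fin k, m i * (P.get i).2.indicator (fun _ => (1:ℕ)) ω := by
        intro ω
        have h2 := hω ω
        have h3 : (0:ℚ) = ∑ i : Fin k, ((m i : ℚ) * χ (P.get i).2 ω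
            - (m i : ℚ) * χ (P.get i).1 ω) := by
          calc (0:ℚ) = N * ∑ i : Fin k, q i * (χ (P.get i).2 ω - χ (P.get i).1 ω) := by
                rw [← h2]; ring
          _ = _ := by
                rw [Finset.mul_sum]
                exact Finset.sum_congr rfl fun i _ => by rw [hm]; ring
        rw [Finset.sum_sub_distrib] at h3
        have h4 : ∑ i : Fin k, (m i : ℚ) * χ (P.get i).1 ω
            = ∑ i : Fin k, (m i : ℚ) * χ (P.get i).2 ω := by linarith
        have hcast : ∀ X : Set Ω, χ X ω = ((X.indicator (fun _ => (1:ℕ)) ω : ℕ) : ℚ) :=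
          fun X => ind_cast X ω
        simp only [hcast] at h4
        exact_mod_cast h4
      -- build the list for the cancelation hypothesis
      set L0 : List (Set Ω × Set Ω) :=
        (List.finRange k).flatMap (fun i => List.replicate (m i) (P.get i)) with hL0
      set nn := L0.length with hnn
      set AA : Fin nn → Set Ω := fun j => (L0.get j).1 with hAA
      set BB : Fin nn → Set Ω := fun j => (L0.get j).2 with hBB
      have hsum0 : ∀ h : Set Ω × Set Ω → ℕ,
          ∑ j : Fin nn, h (L0.get j) = ∑ i : Fin k, m i * h (P.get i) := by
        intro h
        rw [sum_fin_get_map]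
        rw [hL0, List.map_flatMap, List.flatMap, List.sum_flatten, List.map_map]
        rw [Fin.sum_univ_def]
        congr 1
        apply List.map_congr_left
        intro i _
        show (List.map h (List.replicate (m i) (P.get i))).sum = m i * h (P.get i)
        rw [List.map_replicate, List.sum_replicate, smul_eq_mul]
      have hcond : ∀ ω : Ω, ∑ j : Fin nn, (AA j).indicator (fun _ => (1:ℕ)) ω
          = ∑ j : Fin nn, (BB j).indicator (fun _ => (1:ℕ)) ω := by
        intro ω
        have h1 := hsum0 (fun p => p.1.indicator (fun _ => (1:ℕ)) ω)
        have h2 := hsum0 (fun p => p.2.indicator (fun _ => (1:ℕ)) ω)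
        exact h1.trans ((hEq ω).trans h2.symm)
      have hleall : ∀ j : Fin nn, le (AA j) (BB j) := by
        intro j
        have hmem : L0.get j ∈ L0 := L0.get_mem _
        obtain ⟨i, _, hrep⟩ := List.mem_flatMap.mp hmem
        have heqp := List.eq_of_mem_replicate hrep
        show le (L0.get j).1 (L0.get j).2
        rw [heqp]
        exact hmemP _ (P.get_mem _)

      have hall := hcanc nn AA BB hcond hleall
      have hmemL0 : P.get i₀ ∈ L0 :=
        List.mem_flatMap.mpr ⟨i₀, List.mem_finRange _, List.mem_replicate.mpr ⟨hm0, rfl⟩⟩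
      obtain ⟨j, hj⟩ := List.mem_iff_get.mp hmemL0
      have hba : le (BB j) (AA j) := (hall j).2
      apply hstr
      show le (P.get i₀).2 (P.get i₀).1
      rw [← hj]
      exact hba
    -- step B: apply Farkas
    obtain ⟨f, hf, hfy⟩ := farkas (P.map vp).length (P.map vp) rfl y hnc
    -- step C: construct the measure
    set g : Set Ω → ℚ := fun A => f (ext A) with hg
    have hvp : ∀ p : Set Ω × Set Ω,
        f (vp p) = g p.2 - g p.1 + (if le p.2 p.1 then 0 else 1) * f y := by
      intro p
      have hdec : vp p = ext p.2 - ext p.1 + (if le p.2 p.1 then (0:ℚ) else 1) • y := by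
        funext o
        cases o with
        | none =>
          simp only [hvpdef, hext, hydef, Pi.add_apply, Pi.sub_apply, Pi.smul_apply,
            Option.elim, smul_eq_mul]
          split_ifs <;> norm_num
        | some ω =>
          simp only [hvpdef, hext, hydef, Pi.add_apply, Pi.sub_apply, Pi.smul_apply,
            Option.elim, smul_eq_mul]
          split_ifs <;> norm_num
      rw [hdec, map_add, map_sub, map_smul, smul_eq_mul, hg]
    have hg0 : g ∅ = 0 := by
      have hz : ext ∅ = 0 := by
        funext o; cases o <;> simp [hext, hχ]
      rw [hg]
      show f (ext ∅) = 0
      rw [hz, map_zero]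
    have key : ∀ A B : Set Ω, le A B → g A ≤ g B := by
      intro A B h
      have hmem := hf (vp (A, B)) (List.mem_map_of_mem (f := vp) (hPmem (A, B) h))
      rw [hvp] at hmem
      by_cases h2 : le B A
      · simp only [if_pos h2] at hmem
        simp only [zero_mul, add_zero] at hmem
        linarith
      · simp only [if_neg h2, one_mul] at hmem
        linarith
    have hstrictg : ∀ A B : Set Ω, le A B → ¬ le B A → g A < g B := by
      intro A B h h2
      have hmem := hf (vp (A, B)) (List.mem_map_of_mem (f := vp) (hPmem (A, B) h))
      rw [hvp] at hmem
      simp only [if_neg h2, one_mul] at hmem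
      linarith
    have hggA : ∀ A, 0 ≤ g A := fun A => hg0 ▸ key ∅ A (hposi A)
    have hgU : 0 < g Set.univ := hg0 ▸ hstrictg ∅ Set.univ hα hβ
    have hrepg : ∀ A B : Set Ω, le A B ↔ g A ≤ g B := by
      intro A B
      refine ⟨key A B, fun hle2 => ?_⟩
      by_contra hn
      have h3 := (htotal A B).resolve_left hn
      exact absurd hle2 (not_le.mpr (hstrictg B A h3 hn))
    have hgadd : ∀ A B : Set Ω, Disjoint A B → g (A ∪ B) = g A + g B := by
      intro A B hAB
      have hextadd : ext (A ∪ B) = ext A + ext B := by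
        funext o
        cases o with
        | none => simp [hext]
        | some ω =>
          show χ (A ∪ B) ω = χ A ω + χ B ω
          by_cases hA : ω ∈ A
          · have hB : ω ∉ B := Set.disjoint_left.mp hAB hA
            simp [hχ, Set.indicator, hA, hB]
          · by_cases hB : ω ∈ B <;> simp [hχ, Set.indicator, hA, hB]
      rw [hg]
      show f (ext (A ∪ B)) = f (ext A) + f (ext B)
      rw [hextadd, map_add]
    refine ⟨fun A => ((g A / g Set.univ : ℚ) : ℝ), ?_, ?_, ?_, ?_⟩
    · intro A
      show (0:ℝ) ≤ ((g A / g Set.univ : ℚ) : ℝ)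
      exact_mod_cast div_nonneg (hggA A) hgU.le
    · show ((g Set.univ / g Set.univ : ℚ) : ℝ) = 1
      rw [div_self (ne_of_gt hgU)]
      norm_num
    · intro A B h
      show ((g (A ∪ B) / g Set.univ : ℚ) : ℝ)
          = ((g A / g Set.univ : ℚ) : ℝ) + ((g B / g Set.univ : ℚ) : ℝ)
      rw [hgadd A B h]
      push_cast
      ring
    · intro A B
      show le A B ↔ ((g A / g Set.univ : ℚ) : ℝ) ≤ ((g B / g Set.univ : ℚ) : ℝ)
      rw [hrepg A B]
      constructor
      · intro h
        have h' : (g A / g Set.univ : ℚ) ≤ g B / g Set.univ := by gcongr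
        exact_mod_cast h'
      · intro h
        have h' : (g A / g Set.univ : ℚ) ≤ g B / g Set.univ := by exact_mod_cast h
        have h2 := mul_le_mul_of_nonneg_right h' hgU.le
        rwa [div_mul_cancel₀ _ (ne_of_gt hgU), div_mul_cancel₀ _ (ne_of_gt hgU)] at h2
end

section
/- Let H be a real inner product space and p, q, r unit vectors with q ⪯ r under a weak order ⪯ on one-dimensional subspaces (identified with unit vectors up to sign) satisfying the standard assumptions (de Finetti, Negation, Monotonicity) of a likelihood order on all subspaces of H. If q ≠ ±r, and q', r' are unit vectors in span{q,r} with q' ⊥ q and r' ⊥ r, then span{r'} ⪯ span{q'}. -/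
open Submodule

lemma key {H : Type*} [NormedAddCommGroup H] [InnerProductSpace ℝ H]
    (q q' v : H) (hq : ‖q‖ = 1) (hq' : ‖q'‖ = 1)
    (hmem : q' ∈ Submodule.span ℝ ({q, v} : Set H))
    (horth : inner ℝ q' q = (0 : ℝ)) :
    (Submodule.span ℝ ({q} : Set H))ᗮ
      = Submodule.span ℝ ({q'} : Set H) ⊔ (Submodule.span ℝ ({q, v} : Set H))ᗮ := by
  set U := Submodule.span ℝ ({q, v} : Set H) with hUdef
  have hqU : q ∈ U := Submodule.subset_span (by simp)
  have hvU : v ∈ U := Submodule.subset_span (by simp)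
  have hqq' : inner ℝ q q' = (0 : ℝ) := by rw [real_inner_comm]; exact horth
  have hqq : inner ℝ q q = (1 : ℝ) := by
    rw [real_inner_self_eq_norm_sq, hq]; norm_num
  -- U = span {q, q'}
  have hUeq : U = Submodule.span ℝ ({q, q'} : Set H) := by
    apply le_antisymm
    · rw [hUdef, Submodule.span_le]
      rintro x (rfl | rfl)
      · exact Submodule.subset_span (by simp)
      · -- v ∈ span {q, q'}
        obtain ⟨a, b, hab⟩ := Submodule.mem_span_pair.mp hmem
        have hb : b ≠ 0 := by
          rintro rfl
          have : q' = a • q := by rw [← hab]; simp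
          have ha : a = 0 := by
            have h := horth
            rw [this, real_inner_smul_left, hqq, mul_one] at h
            exact h
          have hz : q' = 0 := by rw [this, ha, zero_smul]
          rw [hz] at hq'; simp at hq'
        refine Submodule.mem_span_pair.mpr ⟨-(a * b⁻¹), b⁻¹, ?_⟩
        rw [← hab]
        rw [smul_add, smul_smul, smul_smul]
        field_simp
        module
    · rw [Submodule.span_le]
      rintro x (rfl | rfl)
      · exact hqU
      · exact hmem
  haveI : FiniteDimensional ℝ U := by
    apply FiniteDimensional.span_of_finite
    exact (Set.finite_singleton v).insert q
  apply le_antisymm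
  · intro x hx
    obtain ⟨u, hu, z, hz, rfl⟩ := Submodule.exists_add_mem_mem_orthogonal (K := U) x
    rw [hUeq] at hu
    obtain ⟨c, d, hcd⟩ := Submodule.mem_span_pair.mp hu
    have h1 : inner ℝ q (u + z) = (0 : ℝ) := hx q (Submodule.mem_span_singleton_self q)
    have h2 : inner ℝ q z = (0 : ℝ) := hz q hqU
    have h3 : inner ℝ q u = (0 : ℝ) := by
      have := h1
      rw [inner_add_right, h2] at this
      simpa using this
    have hc : c = 0 := by
      rw [← hcd, inner_add_right, real_inner_smul_right, real_inner_smul_right,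
        hqq, hqq'] at h3
      simpa using h3
    have hu' : u ∈ Submodule.span ℝ ({q'} : Set H) := by
      rw [← hcd, hc, zero_smul, zero_add]
      exact Submodule.smul_mem _ _ (Submodule.mem_span_singleton_self q')
    exact Submodule.add_mem_sup hu' hz
  · apply sup_le
    · rw [Submodule.span_le]
      rintro x rfl
      intro u hu
      obtain ⟨c, rfl⟩ := Submodule.mem_span_singleton.mp hu
      rw [real_inner_smul_left, hqq']
      ring
    · exact Submodule.orthogonal_le (by rw [Submodule.span_le]; rintro x rfl; exact hqU)

/-- Claim 0 of the paper: if q ⪯ r then, taking orthogonal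
complements within the plane span{q,r}, r' ⪯ q'. -/
theorem stmt4 {H : Type*} [NormedAddCommGroup H] [InnerProductSpace ℝ H]
    (le : Submodule ℝ H → Submodule ℝ H → Prop)
    (hrefl : ∀ A, le A A)
    (htrans : ∀ A B C, le A B → le B C → le A C)
    (htotal : ∀ A B, le A B ∨ le B A)
    (hdeFinetti : ∀ A B C : Submodule ℝ H, C ⟂ A → C ⟂ B →
      (le A B ↔ le (A ⊔ C) (B ⊔ C)))
    (hneg : ∀ A B : Submodule ℝ H, le A B → le Bᗮ Aᗮ)
    (hmono : ∀ A : Submodule ℝ H, le ⊥ A)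
    (q r q' r' : H)
    (hq : ‖q‖ = 1) (hr : ‖r‖ = 1) (hq' : ‖q'‖ = 1) (hr' : ‖r'‖ = 1)
    (hne : q ≠ r ∧ q ≠ -r)
    (hqr : le (Submodule.span ℝ {q}) (Submodule.span ℝ {r}))
    (hq'mem : q' ∈ Submodule.span ℝ {q, r}) (hr'mem : r' ∈ Submodule.span ℝ {q, r})
    (hq'q : inner ℝ q' q = (0 : ℝ)) (hr'r : inner ℝ r' r = (0 : ℝ)) :
    le (Submodule.span ℝ {r'}) (Submodule.span ℝ {q'}) := by
  have hpair : ({q, r} : Set H) = ({r, q} : Set H) := Set.pair_comm q r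
  have h1 : le (Submodule.span ℝ ({r} : Set H))ᗮ (Submodule.span ℝ ({q} : Set H))ᗮ :=
    hneg _ _ hqr
  have hQ := key q q' r hq hq' hq'mem hq'q
  have hR := key r r' q hr hr' (by rwa [← hpair]) hr'r
  rw [hQ, hR, ← hpair] at h1
  set U := Submodule.span ℝ ({q, r} : Set H) with hU
  have hC1 : Uᗮ ⟂ Submodule.span ℝ ({r'} : Set H) := by
    rw [Submodule.isOrtho_iff_le]
    exact Submodule.orthogonal_le (by
      rw [Submodule.span_le]; rintro x rfl; exact hr'mem)
  have hC2 : Uᗮ ⟂ Submodule.span ℝ ({q'} : Set H) := by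
    rw [Submodule.isOrtho_iff_le]
    exact Submodule.orthogonal_le (by
      rw [Submodule.span_le]; rintro x rfl; exact hq'mem)
  exact (hdeFinetti _ _ _ hC1 hC2).mpr h1
end

section
/- Let ⪯ be a weak order on subspaces of ℝ³ satisfying the standard assumptions, and let m be a one-dimensional subspace minimal with respect to ⪯ among one-dimensional subspaces. If u₁, u₂ are orthogonal one-dimensional subspaces with u₁ ∼ u₂ ∼ m, then every one-dimensional subspace u contained in u₁ + u₂ satisfies u ∼ m. -/
/-- Claim 2 of the paper: if two orthogonal lines are both
equivalent to the minimal line m, then every line in their span is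
equivalent to m. -/
theorem stmt5
    (le : Submodule ℝ (EuclideanSpace ℝ (Fin 3)) →
          Submodule ℝ (EuclideanSpace ℝ (Fin 3)) → Prop)
    (hrefl : ∀ A, le A A)
    (htrans : ∀ A B C, le A B → le B C → le A C)
    (htotal : ∀ A B, le A B ∨ le B A)
    (hdeFinetti : ∀ A B C, C ⟂ A → C ⟂ B → (le A B ↔ le (A ⊔ C) (B ⊔ C)))
    (hneg : ∀ A B, le A B → le Bᗮ Aᗮ)
    (hmono : ∀ A, le ⊥ A)
    (m : Submodule ℝ (EuclideanSpace ℝ (Fin 3)))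
    (hm : Module.finrank ℝ m = 1)
    (hmin : ∀ v : Submodule ℝ (EuclideanSpace ℝ (Fin 3)),
      Module.finrank ℝ v = 1 → le m v)
    (u₁ u₂ : Submodule ℝ (EuclideanSpace ℝ (Fin 3)))
    (hu₁ : Module.finrank ℝ u₁ = 1) (hu₂ : Module.finrank ℝ u₂ = 1)
    (hperp : u₁ ⟂ u₂)
    (h₁ : le u₁ m ∧ le m u₁) (h₂ : le u₂ m ∧ le m u₂) :
    ∀ u : Submodule ℝ (EuclideanSpace ℝ (Fin 3)),
      Module.finrank ℝ u = 1 → u ≤ u₁ ⊔ u₂ → le u m ∧ le m u := by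
  intro u hu hule
  set P := u₁ ⊔ u₂ with hP
  set w := Pᗮ with hw
  set u' := uᗮ ⊓ P with hu'
  have h3 : Module.finrank ℝ (EuclideanSpace ℝ (Fin 3)) = 3 := by simp
  have horth : ∀ K : Submodule ℝ (EuclideanSpace ℝ (Fin 3)),
      Module.finrank ℝ K + Module.finrank ℝ Kᗮ = 3 := by
    intro K; rw [Submodule.finrank_add_finrank_orthogonal, h3]
  -- dimension of P
  have hPdim : Module.finrank ℝ P = 2 := by
    have := Submodule.finrank_sup_add_finrank_inf_eq u₁ u₂
    rw [hperp.disjoint.eq_bot, hu₁, hu₂] at this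
    simpa using this
  have hwdim : Module.finrank ℝ w = 1 := by
    rw [hw]
    have := horth P
    omega
  -- u' has dimension 1
  have huP : u ⊔ u' = P := Submodule.sup_orthogonal_inf_of_hasOrthogonalProjection hule
  have hu'dim : Module.finrank ℝ u' = 1 := by
    have hdisj : u ⊓ u' = ⊥ := by
      have : u ⟂ uᗮ := Submodule.le_orthogonal_orthogonal u
      exact (this.mono_right inf_le_left).disjoint.eq_bot
    have := Submodule.finrank_sup_add_finrank_inf_eq u u'
    rw [huP, hdisj, hPdim, hu] at this
    simp at this
    omega
  -- w orthogonal to u₂ and u'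
  have hwu₂ : w ⟂ u₂ := Submodule.orthogonal_le le_sup_right
  have hwu' : w ⟂ u' := Submodule.orthogonal_le inf_le_right
  -- u₁ᗮ = u₂ ⊔ w
  have hu₁c : u₂ ⊔ w = u₁ᗮ := by
    apply Submodule.eq_of_le_of_finrank_eq
    · exact sup_le hperp.symm (Submodule.orthogonal_le le_sup_left)
    · have hdisj : u₂ ⊓ w = ⊥ := ((hwu₂.symm : u₂ ⟂ w)).disjoint.eq_bot
      have h1 := Submodule.finrank_sup_add_finrank_inf_eq u₂ w
      rw [hdisj, hu₂, hwdim] at h1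
      have h2 := horth u₁
      rw [hu₁] at h2
      simp at h1
      omega
  -- uᗮ = u' ⊔ w
  have huc : u' ⊔ w = uᗮ := by
    apply Submodule.eq_of_le_of_finrank_eq
    · refine sup_le inf_le_left (Submodule.orthogonal_le ?_)
      exact le_trans hule le_rfl |>.trans (le_of_eq rfl) |>.trans le_rfl
    · have hdisj : u' ⊓ w = ⊥ := ((hwu'.symm : u' ⟂ w)).disjoint.eq_bot
      have h1 := Submodule.finrank_sup_add_finrank_inf_eq u' w
      rw [hdisj, hu'dim, hwdim] at h1
      have h2 := horth u
      rw [hu] at h2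
      simp at h1
      omega
  -- le u₂ u' via minimality
  have step1 : le u₂ u' := htrans _ _ _ h₂.1 (hmin u' hu'dim)
  -- de Finetti with C = w
  have step2 : le (u₂ ⊔ w) (u' ⊔ w) := (hdeFinetti u₂ u' w hwu₂ hwu').mp step1
  rw [hu₁c, huc] at step2
  have step3 : le uᗮᗮ u₁ᗮᗮ := hneg _ _ step2
  rw [Submodule.orthogonal_orthogonal, Submodule.orthogonal_orthogonal] at step3
  exact ⟨htrans _ _ _ step3 h₁.1, hmin u hu⟩
end

section
/- Let ⪯ be a weak order on subspaces of ℝ³ satisfying the standard assumptions, with m a minimal one-dimensional subspace. If there exists an orthogonal triple of one-dimensional subspaces u₁, u₂, u₃ with u₁ ∼ u₂ ∼ u₃ ∼ m, then every one-dimensional subspace v of ℝ³ satisfies v ∼ m (the order is uniform on lines). -/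
open Module Submodule

local notation "E3" => EuclideanSpace ℝ (Fin 3)

private lemma dim3 : Module.finrank ℝ (EuclideanSpace ℝ (Fin 3)) = 3 := by
  simp [finrank_euclideanSpace]

private lemma dim_sup_ortho (a b : Submodule ℝ E3) (hab : a ⟂ b) :
    Module.finrank ℝ (a ⊔ b : Submodule ℝ E3)
      = Module.finrank ℝ a + Module.finrank ℝ b := by
  have h := Submodule.finrank_sup_add_finrank_inf_eq a b
  rw [hab.disjoint.eq_bot, finrank_bot] at h
  omega

/-- Key lemma: if `a, b` are orthogonal lines each `⪯ m`, then any line inside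
`a ⊔ b` is `⪯ m`. -/
private lemma key_s6
    (le : Submodule ℝ E3 → Submodule ℝ E3 → Prop)
    (htrans : ∀ A B C, le A B → le B C → le A C)
    (hdeFinetti : ∀ A B C, C ⟂ A → C ⟂ B → (le A B ↔ le (A ⊔ C) (B ⊔ C)))
    (hneg : ∀ A B, le A B → le Bᗮ Aᗮ)
    (m : Submodule ℝ E3)
    (hmin : ∀ v : Submodule ℝ E3, Module.finrank ℝ v = 1 → le m v)
    (a b : Submodule ℝ E3)
    (ha1 : Module.finrank ℝ a = 1) (hb1 : Module.finrank ℝ b = 1)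
    (hab : a ⟂ b) (ham : le a m) (hbm : le b m)
    (v : Submodule ℝ E3) (hv : Module.finrank ℝ v = 1) (hvab : v ≤ a ⊔ b) :
    le v m := by
  have hab2 : Module.finrank ℝ (a ⊔ b : Submodule ℝ E3) = 2 := by
    rw [dim_sup_ortho a b hab, ha1, hb1]
  set c := (a ⊔ b)ᗮ with hc
  have hc1 : Module.finrank ℝ c = 1 := by
    have := Submodule.finrank_add_finrank_orthogonal (K := a ⊔ b)
    rw [hab2, dim3] at this
    rw [hc]; omega
  have hccomp : cᗮ = a ⊔ b := Submodule.orthogonal_orthogonal _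
  -- the orthogonal complement of v within a ⊔ b
  set v' := vᗮ ⊓ (a ⊔ b) with hv'
  have hvo2 : Module.finrank ℝ (vᗮ) = 2 := by
    have := Submodule.finrank_add_finrank_orthogonal (K := v)
    rw [hv, dim3] at this; omega
  have hsup_top : vᗮ ⊔ (a ⊔ b) = ⊤ := by
    rw [eq_top_iff]
    calc (⊤ : Submodule ℝ E3) = v ⊔ vᗮ := Submodule.sup_orthogonal_of_hasOrthogonalProjection.symm
      _ ≤ vᗮ ⊔ (a ⊔ b) := sup_le (le_sup_of_le_right hvab) le_sup_left
  have hv'1 : Module.finrank ℝ v' = 1 := by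
    have h := Submodule.finrank_sup_add_finrank_inf_eq (vᗮ) (a ⊔ b)
    rw [hsup_top, finrank_top, dim3, hvo2, hab2] at h
    rw [hv']; omega
  have hv'ab : v' ≤ a ⊔ b := inf_le_right
  -- orthogonality facts
  have hca : c ⟂ a := Submodule.isOrtho_iff_le.mpr
    ((Submodule.orthogonal_le (le_sup_left : a ≤ a ⊔ b)))
  have hcb : c ⟂ b := Submodule.isOrtho_iff_le.mpr
    ((Submodule.orthogonal_le (le_sup_right : b ≤ a ⊔ b)))
  have hcv' : c ⟂ v' := Submodule.isOrtho_iff_le.mpr (Submodule.orthogonal_le hv'ab)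
  have hcv : c ⟂ v := Submodule.isOrtho_iff_le.mpr (Submodule.orthogonal_le hvab)
  have hvv' : v ⟂ v' := Submodule.isOrtho_iff_le.mpr
    (le_trans (Submodule.le_orthogonal_orthogonal v) (Submodule.orthogonal_le inf_le_left))
  -- (v' ⊔ c)ᗮ = v
  have hdisj_v'c : Module.finrank ℝ (v' ⊔ c : Submodule ℝ E3) = 2 := by
    rw [dim_sup_ortho v' c hcv'.symm, hv'1, hc1]
  have hveq : v = (v' ⊔ c)ᗮ := by
    have hle : v ≤ (v' ⊔ c)ᗮ :=
      Submodule.isOrtho_iff_le.mp (Submodule.isOrtho_sup_right.mpr ⟨hvv', hcv.symm⟩)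
    refine Submodule.eq_of_le_of_finrank_eq hle ?_
    have := Submodule.finrank_add_finrank_orthogonal (K := v' ⊔ c)
    rw [hdisj_v'c, dim3] at this
    omega
  -- (a ⊔ c)ᗮ = b
  have hac2 : Module.finrank ℝ (a ⊔ c : Submodule ℝ E3) = 2 := by
    rw [dim_sup_ortho a c hca.symm, ha1, hc1]
  have hbeq : b = (a ⊔ c)ᗮ := by
    have hle : b ≤ (a ⊔ c)ᗮ :=
      Submodule.isOrtho_iff_le.mp (Submodule.isOrtho_sup_right.mpr ⟨hab.symm, hcb.symm⟩)
    refine Submodule.eq_of_le_of_finrank_eq hle ?_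
    have := Submodule.finrank_add_finrank_orthogonal (K := a ⊔ c)
    rw [hac2, dim3] at this
    omega
  -- order argument
  have h1 : le a v' := htrans _ _ _ ham (hmin v' hv'1)
  have h2 : le (a ⊔ c) (v' ⊔ c) := (hdeFinetti a v' c hca hcv').mp h1
  have h3 := hneg _ _ h2
  rw [← hveq, ← hbeq] at h3
  exact htrans _ _ _ h3 hbm

/-- Claim 3 of the paper: if an orthogonal triple of lines is
equivalent to the minimal line m, then the order is uniform on lines. -/
theorem stmt6
    (le : Submodule ℝ (EuclideanSpace ℝ (Fin 3)) →
          Submodule ℝ (EuclideanSpace ℝ (Fin 3)) → Prop)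
    (hrefl : ∀ A, le A A)
    (htrans : ∀ A B C, le A B → le B C → le A C)
    (htotal : ∀ A B, le A B ∨ le B A)
    (hdeFinetti : ∀ A B C, C ⟂ A → C ⟂ B → (le A B ↔ le (A ⊔ C) (B ⊔ C)))
    (hneg : ∀ A B, le A B → le Bᗮ Aᗮ)
    (hmono : ∀ A, le ⊥ A)
    (m : Submodule ℝ (EuclideanSpace ℝ (Fin 3)))
    (hm : Module.finrank ℝ m = 1)
    (hmin : ∀ v : Submodule ℝ (EuclideanSpace ℝ (Fin 3)),
      Module.finrank ℝ v = 1 → le m v)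
    (u₁ u₂ u₃ : Submodule ℝ (EuclideanSpace ℝ (Fin 3)))
    (hu₁ : Module.finrank ℝ u₁ = 1) (hu₂ : Module.finrank ℝ u₂ = 1)
    (hu₃ : Module.finrank ℝ u₃ = 1)
    (h12 : u₁ ⟂ u₂) (h13 : u₁ ⟂ u₃) (h23 : u₂ ⟂ u₃)
    (h₁ : le u₁ m ∧ le m u₁) (h₂ : le u₂ m ∧ le m u₂) (h₃ : le u₃ m ∧ le m u₃) :
    ∀ v : Submodule ℝ (EuclideanSpace ℝ (Fin 3)),
      Module.finrank ℝ v = 1 → le v m ∧ le m v := by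
  intro v hv
  refine ⟨?_, hmin v hv⟩
  by_cases hv3 : v ≤ u₃
  · -- v = u₃, so v ≤ u₃ ⊔ u₁
    have hveq : v = u₃ := Submodule.eq_of_le_of_finrank_eq hv3 (hv.trans hu₃.symm)
    exact key_s6 le htrans hdeFinetti hneg m hmin u₃ u₁ hu₃ hu₁ h13.symm h₃.1 h₁.1 v hv
      (hveq ▸ (le_sup_left : u₃ ≤ u₃ ⊔ u₁))
  · -- general case
    set P := u₁ ⊔ u₂ with hP
    have hP2 : Module.finrank ℝ P = 2 := by
      rw [hP, dim_sup_ortho u₁ u₂ h12, hu₁, hu₂]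
    have hu3P : u₃ ⟂ P := by
      rw [hP]; exact Submodule.isOrtho_sup_right.mpr ⟨h13.symm, h23.symm⟩
    -- v ⊓ u₃ = ⊥
    have hdisj : v ⊓ u₃ = ⊥ := by
      by_contra hne
      have hlt : v ⊓ u₃ < v := lt_of_le_of_ne inf_le_left (by
        intro h; exact hv3 (h ▸ (inf_le_right : v ⊓ u₃ ≤ u₃)))
      have := Submodule.finrank_lt_finrank_of_lt hlt
      rw [hv] at this
      interval_cases h : Module.finrank ℝ (v ⊓ u₃ : Submodule ℝ (EuclideanSpace ℝ (Fin 3)))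
      exact hne (Submodule.finrank_eq_zero.mp h)
    have hQ2 : Module.finrank ℝ (v ⊔ u₃ : Submodule ℝ (EuclideanSpace ℝ (Fin 3))) = 2 := by
      have h := Submodule.finrank_sup_add_finrank_inf_eq v u₃
      rw [hdisj, finrank_bot, hv, hu₃] at h
      omega
    set w := (v ⊔ u₃) ⊓ P with hw
    have hsup_top : (v ⊔ u₃) ⊔ P = ⊤ := by
      have h3 : Module.finrank ℝ ((v ⊔ u₃) ⊔ P : Submodule ℝ (EuclideanSpace ℝ (Fin 3))) = 3 := by
        have hle : u₃ ⊔ P ≤ (v ⊔ u₃) ⊔ P :=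
          sup_le (le_sup_of_le_left le_sup_right) le_sup_right
        have hdim : Module.finrank ℝ (u₃ ⊔ P : Submodule ℝ (EuclideanSpace ℝ (Fin 3))) = 3 := by
          rw [dim_sup_ortho u₃ P hu3P, hu₃, hP2]
        have h1 := Submodule.finrank_le ((v ⊔ u₃) ⊔ P : Submodule ℝ (EuclideanSpace ℝ (Fin 3)))
        have h2 := Submodule.finrank_mono hle
        rw [dim3] at h1
        omega
      exact Submodule.eq_top_of_finrank_eq (by rw [h3, dim3])
    have hw1 : Module.finrank ℝ w = 1 := by
      have h := Submodule.finrank_sup_add_finrank_inf_eq (v ⊔ u₃) P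
      rw [hsup_top, finrank_top, dim3, hQ2, hP2] at h
      rw [hw]; omega
    have hwm : le w m :=
      key_s6 le htrans hdeFinetti hneg m hmin u₁ u₂ hu₁ hu₂ h12 h₁.1 h₂.1 w hw1 inf_le_right
    have hwu3 : w ⟂ u₃ := by
      rw [hw]; exact ((hu3P.mono_right inf_le_right)).symm
    have hvwu3 : v ≤ w ⊔ u₃ := by
      have hle : w ⊔ u₃ ≤ v ⊔ u₃ := sup_le inf_le_left le_sup_right
      have hdim : Module.finrank ℝ (w ⊔ u₃ : Submodule ℝ (EuclideanSpace ℝ (Fin 3))) = 2 := by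
        rw [dim_sup_ortho w u₃ hwu3, hw1, hu₃]
      have heq : w ⊔ u₃ = v ⊔ u₃ :=
        Submodule.eq_of_le_of_finrank_eq hle (by rw [hdim, hQ2])
      rw [heq]; exact le_sup_left
    exact key_s6 le htrans hdeFinetti hneg m hmin w u₃ hw1 hu₃ hwu3 hwm h₃.1 v hv hvwu3
end

section
/- Let H be a finite-dimensional Hilbert space and ⪯ a weak order on subspaces satisfying de Finetti's axiom. Suppose A is spanned by orthogonal vectors u₁,…,u_k and span{uᵢ} ∼ {0} for every i. Then A ∼ {0}. -/
/-- Claim `non-trivial` of the paper: if A is spanned by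
orthogonal vectors each of whose spans is equivalent to {0}, then A ∼ {0}. -/
theorem stmt8 {H : Type*} [NormedAddCommGroup H] [InnerProductSpace ℂ H]
    [FiniteDimensional ℂ H]
    (le : Submodule ℂ H → Submodule ℂ H → Prop)
    (hrefl : ∀ A, le A A)
    (htrans : ∀ A B C, le A B → le B C → le A C)
    (htotal : ∀ A B, le A B ∨ le B A)
    (hdeFinetti : ∀ A B C : Submodule ℂ H, C ⟂ A → C ⟂ B →
      (le A B ↔ le (A ⊔ C) (B ⊔ C)))
    (k : ℕ) (u : Fin k → H)
    (horth : ∀ i j, i ≠ j → inner ℂ (u i) (u j) = (0 : ℂ))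
    (A : Submodule ℂ H) (hA : A = Submodule.span ℂ (Set.range u))
    (hu : ∀ i, le (Submodule.span ℂ {u i}) ⊥ ∧ le ⊥ (Submodule.span ℂ {u i})) :
    le A ⊥ ∧ le ⊥ A := by
  subst hA
  induction k with
  | zero =>
    simp only [Set.range_eq_empty, Submodule.span_empty]
    exact ⟨hrefl ⊥, hrefl ⊥⟩
  | succ n ih =>
    have key : Set.range u = insert (u 0) (Set.range (u ∘ Fin.succ)) :=
      Fin.range_fin_succ u
    rw [key, Submodule.span_insert]
    set B := Submodule.span ℂ (Set.range (u ∘ Fin.succ)) with hB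
    set C := Submodule.span ℂ {u 0} with hC
    have hBC : C ⟂ B := by
      rw [hB, hC, Submodule.isOrtho_span]
      rintro x rfl v ⟨i, rfl⟩
      exact horth 0 (i.succ) (Fin.succ_ne_zero i).symm
    have hCbot : C ⟂ (⊥ : Submodule ℂ H) := Submodule.isOrtho_bot_right
    have hBeq : le B ⊥ ∧ le ⊥ B := by
      refine ih (u ∘ Fin.succ) (fun i j hij => horth i.succ j.succ ?_)
        (fun i => hu i.succ)
      simpa using hij
    have h1 : le (B ⊔ C) (⊥ ⊔ C) := (hdeFinetti B ⊥ C hBC hCbot).mp hBeq.1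
    have h2 : le (⊥ ⊔ C) (B ⊔ C) := (hdeFinetti ⊥ B C hCbot hBC).mp hBeq.2
    rw [bot_sup_eq] at h1 h2
    rw [sup_comm]
    have hCu := hu 0
    constructor
    · exact htrans _ _ _ h1 hCu.1
    · exact htrans _ _ _ hCu.2 h2
end

section
/- Let μ₁, μ₂ be two quantum probability measures on a finite-dimensional Hilbert space H (given by positive semidefinite trace-one operators T₁, T₂ via μᵢ(A) = tr(Π_A Tᵢ)). Define the lexicographic order: A ⪯ B iff μ₁(A) < μ₁(B), or μ₁(A) = μ₁(B) and μ₂(A) ≤ μ₂(B). Then ⪯ satisfies de Finetti's axiom, Negation, and Monotonicity. -/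
noncomputable def proj {H : Type*} [NormedAddCommGroup H] [InnerProductSpace ℂ H]
    [FiniteDimensional ℂ H] (A : Submodule ℂ H) : H →ₗ[ℂ] H :=
  (A.subtypeL.comp A.orthogonalProjectionOnto).toLinearMap

noncomputable def mu {H : Type*} [NormedAddCommGroup H] [InnerProductSpace ℂ H]
    [FiniteDimensional ℂ H] (T : H →ₗ[ℂ] H) (A : Submodule ℂ H) : ℝ :=
  RCLike.re (LinearMap.trace ℂ H ((proj A) ∘ₗ T))

section aux

variable {H : Type*} [NormedAddCommGroup H] [InnerProductSpace ℂ H]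
    [FiniteDimensional ℂ H]

lemma proj_apply (A : Submodule ℂ H) (x : H) :
    proj A x = (A.orthogonalProjectionOnto x : H) := rfl

lemma proj_symm (A : Submodule ℂ H) : (proj A).IsSymmetric :=
  A.starProjection_isSymmetric

lemma proj_mem (A : Submodule ℂ H) {x : H} (hx : x ∈ A) : proj A x = x := by
  simp [proj_apply, Submodule.starProjection_eq_self_iff.mpr hx,
    Submodule.orthogonalProjectionOnto_mem_subspace_eq_self (K := A) ⟨x, hx⟩]

lemma proj_idem (A : Submodule ℂ H) : proj A ∘ₗ proj A = proj A := by
  ext x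
  exact proj_mem A (by simp [proj_apply])

lemma proj_sup {A C : Submodule ℂ H} (h : C ⟂ A) :
    proj (A ⊔ C) = proj A + proj C := by
  ext x
  have hmem : proj A x + proj C x ∈ A ⊔ C :=
    Submodule.add_mem_sup (by simp [proj_apply]) (by simp [proj_apply])
  have horth : x - (proj A x + proj C x) ∈ (A ⊔ C)ᗮ := by
    rw [← Submodule.inf_orthogonal]
    constructor
    · have h1 : x - proj A x ∈ Aᗮ := Submodule.sub_starProjection_mem_orthogonal (K := A) x
      have h2 : proj C x ∈ Aᗮ := h (by simp [proj_apply])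
      have := Aᗮ.sub_mem h1 h2
      simpa [sub_sub] using this
    · have h1 : x - proj C x ∈ Cᗮ := Submodule.sub_starProjection_mem_orthogonal (K := C) x
      have h2 : proj A x ∈ Cᗮ := h.symm (by simp [proj_apply])
      have := Cᗮ.sub_mem h1 h2
      have : x - proj C x - proj A x ∈ Cᗮ := this
      simpa [sub_sub, add_comm] using this
  have := Submodule.eq_starProjection_of_mem_orthogonal (K := A ⊔ C) hmem
    (by simpa using horth)
  simpa [proj_apply] using this

lemma proj_top : proj (⊤ : Submodule ℂ H) = LinearMap.id := by
  ext x
  exact proj_mem ⊤ trivial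

lemma mu_add (T : H →ₗ[ℂ] H) {A C : Submodule ℂ H} (h : C ⟂ A) :
    mu T (A ⊔ C) = mu T A + mu T C := by
  unfold mu
  rw [proj_sup h, LinearMap.add_comp, map_add, map_add]

lemma trace_eq_sum_inner (f : H →ₗ[ℂ] H) (e : OrthonormalBasis (Fin (Module.finrank ℂ H)) ℂ H) :
    LinearMap.trace ℂ H f = ∑ i, (inner ℂ (e i) (f (e i)) : ℂ) := by
  rw [LinearMap.trace_eq_matrix_trace ℂ e.toBasis, Matrix.trace]
  congr 1
  ext i
  rw [Matrix.diag_apply, LinearMap.toMatrix_apply, OrthonormalBasis.coe_toBasis,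
    ← OrthonormalBasis.repr_apply_apply, OrthonormalBasis.coe_toBasis_repr_apply]

lemma mu_nonneg (T : H →ₗ[ℂ] H)
    (hpos : ∀ x : H, 0 ≤ RCLike.re (inner ℂ (T x) x : ℂ)) (A : Submodule ℂ H) :
    0 ≤ mu T A := by
  unfold mu
  have key : proj A ∘ₗ T = proj A ∘ₗ ((T ∘ₗ proj A)) ∨ True := Or.inr trivial
  have h1 : LinearMap.trace ℂ H (proj A ∘ₗ T) =
      LinearMap.trace ℂ H (proj A ∘ₗ (T ∘ₗ proj A)) := by
    have : proj A ∘ₗ T = (proj A ∘ₗ proj A) ∘ₗ T := by rw [proj_idem]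
    rw [this]
    have hmc := LinearMap.trace_mul_comm ℂ (proj A) ((proj A) ∘ₗ T)
    simp only [Module.End.mul_eq_comp] at hmc
    rw [LinearMap.comp_assoc, hmc, LinearMap.comp_assoc]
  rw [h1]
  set e := stdOrthonormalBasis ℂ H
  rw [trace_eq_sum_inner _ e, map_sum]
  apply Finset.sum_nonneg
  intro i _
  have hsym : (inner ℂ (e i) ((proj A) (T (proj A (e i)))) : ℂ)
      = inner ℂ (proj A (e i)) (T (proj A (e i))) := by
    rw [← proj_symm A (e i) (T (proj A (e i)))]
  simp only [LinearMap.comp_apply]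
  rw [hsym, ← inner_conj_symm]
  rw [RCLike.conj_re]
  exact hpos _

lemma mu_compl (T : H →ₗ[ℂ] H) (htr : LinearMap.trace ℂ H T = 1) (A : Submodule ℂ H) :
    mu T Aᗮ = 1 - mu T A := by
  have h := mu_add T (A := A) (C := Aᗮ) (Submodule.isOrtho_orthogonal_left A)
  rw [Submodule.sup_orthogonal_of_hasOrthogonalProjection] at h
  have htop : mu T ⊤ = 1 := by
    unfold mu
    rw [proj_top, LinearMap.id_comp, htr]
    simp
  rw [htop] at h
  linarith

lemma mu_bot (T : H →ₗ[ℂ] H) : mu T ⊥ = 0 := by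
  have : proj (⊥ : Submodule ℂ H) = 0 := by
    ext x
    simp [proj_apply]
  unfold mu
  rw [this, LinearMap.zero_comp]
  simp

end aux

/-- the lexicographic order induced by two quantum probability
measures satisfies de Finetti's axiom, Negation, and Monotonicity. -/
theorem stmt9 {H : Type*} [NormedAddCommGroup H] [InnerProductSpace ℂ H]
    [FiniteDimensional ℂ H] (T₁ T₂ : H →ₗ[ℂ] H)
    (hsym₁ : T₁.IsSymmetric) (hsym₂ : T₂.IsSymmetric)
    (hpos₁ : ∀ x : H, 0 ≤ RCLike.re (inner ℂ (T₁ x) x : ℂ))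
    (hpos₂ : ∀ x : H, 0 ≤ RCLike.re (inner ℂ (T₂ x) x : ℂ))
    (htr₁ : LinearMap.trace ℂ H T₁ = 1) (htr₂ : LinearMap.trace ℂ H T₂ = 1)
    (le : Submodule ℂ H → Submodule ℂ H → Prop)
    (hle : ∀ A B, le A B ↔
      (mu T₁ A < mu T₁ B ∨ (mu T₁ A = mu T₁ B ∧ mu T₂ A ≤ mu T₂ B))) :
    (∀ A B C : Submodule ℂ H, C ⟂ A → C ⟂ B →
      (le A B ↔ le (A ⊔ C) (B ⊔ C))) ∧
    (∀ A B : Submodule ℂ H, le A B → le Bᗮ Aᗮ) ∧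
    (∀ A : Submodule ℂ H, le ⊥ A) := by
  refine ⟨?_, ?_, ?_⟩
  · intro A B C hCA hCB
    rw [hle, hle, mu_add T₁ hCA, mu_add T₁ hCB, mu_add T₂ hCA, mu_add T₂ hCB]
    constructor
    · rintro (h | ⟨h1, h2⟩)
      · exact Or.inl (by linarith)
      · exact Or.inr ⟨by linarith, by linarith⟩
    · rintro (h | ⟨h1, h2⟩)
      · exact Or.inl (by linarith)
      · exact Or.inr ⟨by linarith, by linarith⟩
  · intro A B h
    rw [hle] at h ⊢
    rw [mu_compl T₁ htr₁, mu_compl T₁ htr₁, mu_compl T₂ htr₂, mu_compl T₂ htr₂]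
    rcases h with h | ⟨h1, h2⟩
    · exact Or.inl (by linarith)
    · exact Or.inr ⟨by linarith, by linarith⟩
  · intro A
    rw [hle, mu_bot, mu_bot]
    rcases lt_or_eq_of_le (mu_nonneg T₁ hpos₁ A) with h | h
    · exact Or.inl h
    · exact Or.inr ⟨h, mu_nonneg T₂ hpos₂ A⟩
end

section
/- Let H be a finite-dimensional Hilbert space with dim H = n ≥ 1, and ⪯ a weak order on subspaces satisfying de Finetti's axiom. Suppose all one-dimensional subspaces are ⪯-equivalent. Then any two subspaces of the same dimension are ⪯-equivalent. -/
open Module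

section Aux

variable {H : Type*} [NormedAddCommGroup H] [InnerProductSpace ℂ H] [FiniteDimensional ℂ H]

/-- Step lemma: two subspaces of the same dimension whose intersection is a
hyperplane in each are related. -/
lemma stmt10_step (le : Submodule ℂ H → Submodule ℂ H → Prop)
    (hdeFinetti : ∀ A B C : Submodule ℂ H, C ⟂ A → C ⟂ B →
      (le A B ↔ le (A ⊔ C) (B ⊔ C)))
    (hlines : ∀ u v : Submodule ℂ H,
      Module.finrank ℂ u = 1 → Module.finrank ℂ v = 1 → le u v)
    (A B : Submodule ℂ H) (hAB : finrank ℂ A = finrank ℂ B)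
    (hinf : finrank ℂ (A ⊓ B : Submodule ℂ H) + 1 = finrank ℂ A) : le A B := by
  have hCA : A ⊓ B ≤ A := inf_le_left
  have hCB : A ⊓ B ≤ B := inf_le_right
  have h1 := Submodule.finrank_add_inf_finrank_orthogonal hCA
  have h2 := Submodule.finrank_add_inf_finrank_orthogonal hCB
  have hufin : finrank ℂ ((A ⊓ B)ᗮ ⊓ A : Submodule ℂ H) = 1 := by omega
  have hvfin : finrank ℂ ((A ⊓ B)ᗮ ⊓ B : Submodule ℂ H) = 1 := by omega
  have hCu : (A ⊓ B) ⟂ ((A ⊓ B)ᗮ ⊓ A) :=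
    (Submodule.isOrtho_orthogonal_right (A ⊓ B)).mono_right inf_le_left
  have hCv : (A ⊓ B) ⟂ ((A ⊓ B)ᗮ ⊓ B) :=
    (Submodule.isOrtho_orthogonal_right (A ⊓ B)).mono_right inf_le_left
  have h := (hdeFinetti _ _ (A ⊓ B) hCu hCv).mp (hlines _ _ hufin hvfin)
  rwa [sup_comm _ (A ⊓ B), sup_comm _ (A ⊓ B),
    Submodule.sup_orthogonal_inf_of_hasOrthogonalProjection hCA,
    Submodule.sup_orthogonal_inf_of_hasOrthogonalProjection hCB] at h

lemma stmt10_aux (le : Submodule ℂ H → Submodule ℂ H → Prop)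
    (hrefl : ∀ A, le A A)
    (htrans : ∀ A B C, le A B → le B C → le A C)
    (hdeFinetti : ∀ A B C : Submodule ℂ H, C ⟂ A → C ⟂ B →
      (le A B ↔ le (A ⊔ C) (B ⊔ C)))
    (hlines : ∀ u v : Submodule ℂ H,
      Module.finrank ℂ u = 1 → Module.finrank ℂ v = 1 → le u v) :
    ∀ (m : ℕ) (A B : Submodule ℂ H), finrank ℂ A = finrank ℂ B →
      finrank ℂ A ≤ finrank ℂ (A ⊓ B : Submodule ℂ H) + m → le A B ∧ le B A := by
  intro m
  induction m with
  | zero =>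
    intro A B hAB hm
    have h1 : (A ⊓ B : Submodule ℂ H) = A :=
      Submodule.eq_of_le_of_finrank_le inf_le_left (by omega)
    have h2 : (A ⊓ B : Submodule ℂ H) = B :=
      Submodule.eq_of_le_of_finrank_le inf_le_right (by omega)
    rw [← h2, h1]
    exact ⟨hrefl A, hrefl A⟩
  | succ m ih =>
    intro A B hAB hm
    by_cases hd : finrank ℂ A ≤ finrank ℂ (A ⊓ B : Submodule ℂ H)
    · have h1 : (A ⊓ B : Submodule ℂ H) = A :=
        Submodule.eq_of_le_of_finrank_le inf_le_left hd
      have h2 : (A ⊓ B : Submodule ℂ H) = B :=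
        Submodule.eq_of_le_of_finrank_le inf_le_right (hAB ▸ hd)
      rw [← h2, h1]
      exact ⟨hrefl A, hrefl A⟩
    push_neg at hd
    -- pick x ∈ B \ A
    have hBnleA : ¬ B ≤ A := by
      intro h
      rw [inf_eq_right.mpr h, ← hAB] at hd; omega
    obtain ⟨x, hxB, hxA⟩ := SetLike.not_le_iff_exists.mp hBnleA
    have hx0 : x ≠ 0 := fun h => hxA (h ▸ A.zero_mem)
    -- pick w ∈ A nonzero orthogonal to D := A ⊓ B
    have hDA : A ⊓ B ≤ A := inf_le_left
    have hwdim := Submodule.finrank_add_inf_finrank_orthogonal hDA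
    have hwne : ((A ⊓ B)ᗮ ⊓ A : Submodule ℂ H) ≠ ⊥ := by
      intro h
      rw [h, finrank_bot] at hwdim; omega
    obtain ⟨w, hw, hw0⟩ := Submodule.exists_mem_ne_zero_of_ne_bot hwne
    have hWA : Submodule.span ℂ {w} ≤ A :=
      (Submodule.span_singleton_le_iff_mem _ _).mpr hw.2
    have hWfin : finrank ℂ (Submodule.span ℂ {w}) = 1 := finrank_span_singleton hw0
    -- E := (span w)ᗮ ⊓ A : a hyperplane in A containing A ⊓ B
    have hEfin := Submodule.finrank_add_inf_finrank_orthogonal hWA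
    have hEA : (Submodule.span ℂ {w})ᗮ ⊓ A ≤ A := inf_le_right
    have hDE : A ⊓ B ≤ (Submodule.span ℂ {w})ᗮ ⊓ A := by
      refine le_inf ?_ hDA
      exact le_trans (Submodule.le_orthogonal_orthogonal _)
        (Submodule.orthogonal_le ((Submodule.span_singleton_le_iff_mem _ _).mpr hw.1))
    have hLfin : finrank ℂ (Submodule.span ℂ {x}) = 1 := finrank_span_singleton hx0
    have hLB : Submodule.span ℂ {x} ≤ B := (Submodule.span_singleton_le_iff_mem _ _).mpr hxB
    -- the intermediate space A' := E ⊔ span x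
    have hmeet : ∀ (P : Submodule ℂ H), P ≤ A → P ⊓ Submodule.span ℂ {x} = ⊥ := by
      intro P hPA
      rw [eq_bot_iff]
      intro y hy
      rcases Submodule.mem_span_singleton.mp hy.2 with ⟨c, rfl⟩
      rcases eq_or_ne c 0 with rfl | hc
      · simp
      · exact absurd (A.smul_mem c⁻¹ (hPA hy.1))
          (by simpa [smul_smul, inv_mul_cancel₀ hc] using hxA)
    have hEL := hmeet _ hEA
    have hA'fin : finrank ℂ ((Submodule.span ℂ {w})ᗮ ⊓ A ⊔ Submodule.span ℂ {x} :
        Submodule ℂ H) = finrank ℂ A := by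
      have := Submodule.finrank_sup_add_finrank_inf_eq
        ((Submodule.span ℂ {w})ᗮ ⊓ A) (Submodule.span ℂ {x})
      rw [hEL, finrank_bot] at this
      omega
    set A' : Submodule ℂ H := (Submodule.span ℂ {w})ᗮ ⊓ A ⊔ Submodule.span ℂ {x} with hA'
    have hAA' : A ≠ A' := fun h =>
      hxA (h ▸ (le_sup_right.trans_eq rfl : Submodule.span ℂ {x} ≤ A')
        (Submodule.mem_span_singleton_self x))
    have hEAA' : (Submodule.span ℂ {w})ᗮ ⊓ A ≤ A ⊓ A' := le_inf hEA le_sup_left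
    have hAA'le : A ⊓ A' ≠ A := by
      intro h
      have hle : A ≤ A' := inf_eq_left.mp h
      exact hAA' (Submodule.eq_of_le_of_finrank_le hle (le_of_eq hA'fin))
    have hAA'fin : finrank ℂ (A ⊓ A' : Submodule ℂ H) + 1 = finrank ℂ A := by
      have h1 : finrank ℂ (A ⊓ A' : Submodule ℂ H) ≤ finrank ℂ A :=
        Submodule.finrank_mono inf_le_left
      have h2 : finrank ℂ ((Submodule.span ℂ {w})ᗮ ⊓ A : Submodule ℂ H) ≤
          finrank ℂ (A ⊓ A' : Submodule ℂ H) := Submodule.finrank_mono hEAA'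
      rcases lt_or_eq_of_le h1 with h | h
      · omega
      · exact absurd
          (Submodule.eq_of_le_of_finrank_le (inf_le_left : A ⊓ A' ≤ A) h.symm.le) hAA'le
    have step1 : le A A' := stmt10_step le hdeFinetti hlines A A' hA'fin.symm hAA'fin
    have step2 : le A' A := stmt10_step le hdeFinetti hlines A' A hA'fin
      (by rwa [inf_comm, hA'fin])
    -- A' ⊓ B contains (A ⊓ B) ⊔ span x, of dimension finrank (A ⊓ B) + 1
    have hDL := hmeet _ hDA
    have hDLfin : finrank ℂ (A ⊓ B ⊔ Submodule.span ℂ {x} : Submodule ℂ H) =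
        finrank ℂ (A ⊓ B : Submodule ℂ H) + 1 := by
      have := Submodule.finrank_sup_add_finrank_inf_eq (A ⊓ B) (Submodule.span ℂ {x})
      rw [hDL, finrank_bot] at this
      omega
    have hDLsub : A ⊓ B ⊔ Submodule.span ℂ {x} ≤ A' ⊓ B :=
      sup_le (le_inf (hDE.trans le_sup_left) inf_le_right) (le_inf le_sup_right hLB)
    have hA'Bfin : finrank ℂ (A ⊓ B : Submodule ℂ H) + 1 ≤
        finrank ℂ (A' ⊓ B : Submodule ℂ H) := by
      rw [← hDLfin]; exact Submodule.finrank_mono hDLsub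
    obtain ⟨ih1, ih2⟩ := ih A' B (hA'fin.trans hAB) (by omega)
    exact ⟨htrans _ _ _ step1 ih1, htrans _ _ _ ih2 step2⟩

end Aux

/-- under de Finetti's axiom, if all lines are equivalent, then
any two subspaces of the same dimension are equivalent. -/
theorem stmt10 {H : Type*} [NormedAddCommGroup H] [InnerProductSpace ℂ H]
    [FiniteDimensional ℂ H] (hdim : 1 ≤ Module.finrank ℂ H)
    (le : Submodule ℂ H → Submodule ℂ H → Prop)
    (hrefl : ∀ A, le A A)
    (htrans : ∀ A B C, le A B → le B C → le A C)
    (htotal : ∀ A B, le A B ∨ le B A)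
    (hdeFinetti : ∀ A B C : Submodule ℂ H, C ⟂ A → C ⟂ B →
      (le A B ↔ le (A ⊔ C) (B ⊔ C)))
    (hlines : ∀ u v : Submodule ℂ H,
      Module.finrank ℂ u = 1 → Module.finrank ℂ v = 1 → le u v) :
    ∀ A B : Submodule ℂ H,
      Module.finrank ℂ A = Module.finrank ℂ B → le A B ∧ le B A := by
  intro A B hAB
  exact stmt10_aux le hrefl htrans hdeFinetti hlines (finrank ℂ A) A B hAB (by omega)
end

section
/- Let H be a finite-dimensional Hilbert space, dim H = n, and ⪯ a weak order on subspaces satisfying de Finetti's axiom such that all one-dimensional subspaces are equivalent to a fixed line m, and {0} ≺ m. Then for subspaces A, B: A ⪯ B iff dim A ≤ dim B; in particular ⪯ is represented by the uniform measure μ(A) = dim A / dim H. -/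
open Module Submodule

section helpers
variable {H : Type*} [NormedAddCommGroup H] [InnerProductSpace ℂ H] [FiniteDimensional ℂ H]

lemma aux_line (A : Submodule ℂ H) (h : A ≠ ⊥) :
    ∃ ℓ : Submodule ℂ H, ℓ ≤ A ∧ finrank ℂ ℓ = 1 := by
  obtain ⟨v, hv, hv0⟩ := Submodule.exists_mem_ne_zero_of_ne_bot h
  exact ⟨Submodule.span ℂ {v}, (Submodule.span_singleton_le_iff_mem v A).mpr hv,
    finrank_span_singleton hv0⟩

lemma aux_sup_line (D c : Submodule ℂ H) (hc : finrank ℂ c = 1) (hdisj : c ⊓ D = ⊥) :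
    finrank ℂ (D ⊔ c : Submodule ℂ H) = finrank ℂ D + 1 := by
  have := Submodule.finrank_sup_add_finrank_inf_eq D c
  rw [inf_comm, hdisj] at this
  simp only [finrank_bot, add_zero] at this
  omega

lemma aux_exists_sub : ∀ (r : ℕ) (A : Submodule ℂ H), r ≤ finrank ℂ A →
    ∃ A' ≤ A, finrank ℂ A' = r := by
  intro r
  induction r with
  | zero => exact fun A _ => ⟨⊥, bot_le, finrank_bot ℂ H⟩
  | succ r ih =>
    intro A hr
    obtain ⟨A', hA'le, hA'rk⟩ := ih A (by omega)
    have hne : A' ≠ A := fun h => by rw [h] at hA'rk; omega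
    have : ∃ v ∈ A, v ∉ A' := by
      by_contra hc
      push_neg at hc
      exact hne (le_antisymm hA'le hc)
    obtain ⟨v, hvA, hvA'⟩ := this
    have hv0 : v ≠ 0 := fun h => hvA' (h ▸ A'.zero_mem)
    refine ⟨A' ⊔ Submodule.span ℂ {v}, sup_le hA'le
      ((Submodule.span_singleton_le_iff_mem v A).mpr hvA), ?_⟩
    have hdisj : Submodule.span ℂ {v} ⊓ A' = ⊥ := by
      rw [Submodule.eq_bot_iff]
      rintro x ⟨hx1, hx2⟩
      obtain ⟨c, rfl⟩ := Submodule.mem_span_singleton.mp hx1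
      rcases eq_or_ne c 0 with rfl | hc0
      · simp
      · exact absurd (by simpa [smul_smul, inv_mul_cancel₀ hc0] using A'.smul_mem c⁻¹ hx2) hvA'
    rw [aux_sup_line A' _ (finrank_span_singleton hv0) hdisj, hA'rk]

end helpers

/-- if all lines are equivalent to a fixed line m with {0} ≺ m,
then the order is represented by the uniform measure μ(A) = dim A / dim H. -/
theorem stmt11 {H : Type*} [NormedAddCommGroup H] [InnerProductSpace ℂ H]
    [FiniteDimensional ℂ H]
    (le : Submodule ℂ H → Submodule ℂ H → Prop)
    (hrefl : ∀ A, le A A)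
    (htrans : ∀ A B C, le A B → le B C → le A C)
    (htotal : ∀ A B, le A B ∨ le B A)
    (hdeFinetti : ∀ A B C : Submodule ℂ H, C ⟂ A → C ⟂ B →
      (le A B ↔ le (A ⊔ C) (B ⊔ C)))
    (m : Submodule ℂ H) (hm : Module.finrank ℂ m = 1)
    (hlines : ∀ v : Submodule ℂ H, Module.finrank ℂ v = 1 → le v m ∧ le m v)
    (hstrict : le ⊥ m ∧ ¬ le m ⊥) :
    ∀ A B : Submodule ℂ H,
      le A B ↔ (Module.finrank ℂ A : ℝ) / (Module.finrank ℂ H : ℝ)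
        ≤ (Module.finrank ℂ B : ℝ) / (Module.finrank ℂ H : ℝ) := by
  -- lines are all equivalent
  have hline_le : ∀ u v : Submodule ℂ H, finrank ℂ u = 1 → finrank ℂ v = 1 → le u v :=
    fun u v hu hv => htrans _ _ _ (hlines u hu).1 (hlines v hv).2
  have hbotline : ∀ v : Submodule ℂ H, finrank ℂ v = 1 → le ⊥ v ∧ ¬ le v ⊥ := by
    intro v hv
    exact ⟨htrans _ _ _ hstrict.1 (hlines v hv).2,
      fun h => hstrict.2 (htrans _ _ _ (hlines v hv).2 h)⟩
  -- L1 : le ⊥ A for all A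
  have L1 : ∀ (k : ℕ) (A : Submodule ℂ H), finrank ℂ A ≤ k → le ⊥ A := by
    intro k
    induction k with
    | zero =>
      intro A hA
      have : A = ⊥ := Submodule.finrank_eq_zero.mp (by omega)
      rw [this]; exact hrefl _
    | succ k ih =>
      intro A hA
      rcases eq_or_ne A ⊥ with rfl | hb
      · exact hrefl _
      obtain ⟨ℓ, hℓA, hℓ1⟩ := aux_line A hb
      set D : Submodule ℂ H := ℓᗮ ⊓ A with hDdef
      have hrk : finrank ℂ ℓ + finrank ℂ D = finrank ℂ A :=
        Submodule.finrank_add_inf_finrank_orthogonal hℓA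
      have hDle : le ⊥ D := ih D (by omega)
      have hortho1 : (ℓ : Submodule ℂ H) ⟂ (⊥ : Submodule ℂ H) := Submodule.isOrtho_bot_right
      have hortho2 : (ℓ : Submodule ℂ H) ⟂ D :=
        (Submodule.isOrtho_iff_le.mpr (inf_le_left : D ≤ ℓᗮ)).symm
      have := (hdeFinetti ⊥ D ℓ hortho1 hortho2).mp hDle
      rw [bot_sup_eq, sup_comm D ℓ, Submodule.sup_orthogonal_inf_of_hasOrthogonalProjection hℓA] at this
      exact htrans _ _ _ (hbotline ℓ hℓ1).1 this
  -- L3 : monotone under containment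
  have L3 : ∀ A B : Submodule ℂ H, A ≤ B → le A B := by
    intro A B hAB
    have h1 : le ⊥ (Aᗮ ⊓ B) := L1 _ _ le_rfl
    have hoA : (A : Submodule ℂ H) ⟂ (⊥ : Submodule ℂ H) := Submodule.isOrtho_bot_right
    have hoC : (A : Submodule ℂ H) ⟂ (Aᗮ ⊓ B) :=
      (Submodule.isOrtho_iff_le.mpr (inf_le_left : Aᗮ ⊓ B ≤ Aᗮ)).symm
    have := (hdeFinetti ⊥ (Aᗮ ⊓ B) A hoA hoC).mp h1
    rw [bot_sup_eq, sup_comm, Submodule.sup_orthogonal_inf_of_hasOrthogonalProjection hAB] at this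
    exact this
  -- L2 : nonzero spaces are strictly above ⊥
  have L2 : ∀ A : Submodule ℂ H, A ≠ ⊥ → ¬ le A ⊥ := by
    intro A hA hle
    obtain ⟨ℓ, hℓA, hℓ1⟩ := aux_line A hA
    exact (hbotline ℓ hℓ1).2 (htrans _ _ _ (L3 ℓ A hℓA) hle)
  -- L4 : strict containment gives strict order
  have L4 : ∀ A B : Submodule ℂ H, A ≤ B → A ≠ B → ¬ le B A := by
    intro A B hAB hne hle
    have hsup : A ⊔ Aᗮ ⊓ B = B := Submodule.sup_orthogonal_inf_of_hasOrthogonalProjection hAB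
    have hC : (Aᗮ ⊓ B : Submodule ℂ H) ≠ ⊥ := by
      intro h
      rw [h, sup_bot_eq] at hsup
      exact hne hsup
    have hoA : (A : Submodule ℂ H) ⟂ (⊥ : Submodule ℂ H) := Submodule.isOrtho_bot_right
    have hoC : (A : Submodule ℂ H) ⟂ (Aᗮ ⊓ B) :=
      (Submodule.isOrtho_iff_le.mpr (inf_le_left : Aᗮ ⊓ B ≤ Aᗮ)).symm
    have := (hdeFinetti (Aᗮ ⊓ B) ⊥ A hoC hoA).mpr (by rwa [bot_sup_eq, sup_comm, hsup])
    exact L2 _ hC this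
  -- L5 : exchange a line orthogonal to D
  have L5 : ∀ D a c : Submodule ℂ H, finrank ℂ a = 1 → finrank ℂ c = 1 →
      D ⟂ a → D ⟂ c → le (D ⊔ a) (D ⊔ c) := by
    intro D a c ha hc hDa hDc
    have := (hdeFinetti a c D hDa hDc).mp (hline_le a c ha hc)
    rwa [sup_comm a D, sup_comm c D] at this
  -- L6 : equal dimensions give le, by induction on the "defect"
  have L6 : ∀ (d : ℕ) (A B : Submodule ℂ H), finrank ℂ A = finrank ℂ B →
      finrank ℂ A - finrank ℂ (A ⊓ B : Submodule ℂ H) ≤ d → le A B := by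
    intro d
    induction d with
    | zero =>
      intro A B heq hd
      have hle1 : finrank ℂ (A ⊓ B : Submodule ℂ H) ≤ finrank ℂ A :=
        Submodule.finrank_mono inf_le_left
      have : A ⊓ B = A := Submodule.eq_of_le_of_finrank_le inf_le_left (by omega)
      exact L3 A B (this ▸ inf_le_right)
    | succ d ih =>
      intro A B heq hd
      by_cases hAB : A ≤ B
      · exact L3 A B hAB
      have hlt : finrank ℂ (A ⊓ B : Submodule ℂ H) < finrank ℂ A := by
        rcases lt_or_eq_of_le (Submodule.finrank_mono
          (inf_le_left : A ⊓ B ≤ A)) with h | h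
        · exact h
        · exact absurd ((Submodule.eq_of_le_of_finrank_le inf_le_left (le_of_eq h.symm))
            ▸ (inf_le_right : A ⊓ B ≤ B)) hAB
      -- W := part of A orthogonal to A ⊓ B
      have hWrk : finrank ℂ (A ⊓ B : Submodule ℂ H) +
          finrank ℂ ((A ⊓ B)ᗮ ⊓ A : Submodule ℂ H) = finrank ℂ A :=
        Submodule.finrank_add_inf_finrank_orthogonal inf_le_left
      have hWne : ((A ⊓ B)ᗮ ⊓ A : Submodule ℂ H) ≠ ⊥ := by
        intro h
        rw [h] at hWrk
        simp only [finrank_bot, add_zero] at hWrk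
        omega
      obtain ⟨a, haW, ha1⟩ := aux_line _ hWne
      have haA : a ≤ A := le_trans haW inf_le_right
      set D : Submodule ℂ H := aᗮ ⊓ A with hDdef
      have hDrk : finrank ℂ a + finrank ℂ D = finrank ℂ A :=
        Submodule.finrank_add_inf_finrank_orthogonal haA
      have hADsup : a ⊔ D = A := Submodule.sup_orthogonal_inf_of_hasOrthogonalProjection haA
      have hABD : A ⊓ B ≤ D := by
        refine le_inf ?_ inf_le_left
        have : a ⟂ (A ⊓ B) := Submodule.isOrtho_iff_le.mpr (le_trans haW inf_le_left)
        exact Submodule.isOrtho_iff_le.mp this.symm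
      -- E := Dᗮ ⊓ B is nonzero
      have hDo : finrank ℂ D + finrank ℂ (Dᗮ : Submodule ℂ H) = finrank ℂ H :=
        Submodule.finrank_add_finrank_orthogonal D
      have hsupinf : finrank ℂ (Dᗮ ⊔ B : Submodule ℂ H) +
          finrank ℂ (Dᗮ ⊓ B : Submodule ℂ H) = finrank ℂ (Dᗮ : Submodule ℂ H) + finrank ℂ B :=
        Submodule.finrank_sup_add_finrank_inf_eq _ _
      have hsuple : finrank ℂ (Dᗮ ⊔ B : Submodule ℂ H) ≤ finrank ℂ H :=
        Submodule.finrank_le _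
      have hEpos : 0 < finrank ℂ (Dᗮ ⊓ B : Submodule ℂ H) := by omega
      have hEne : (Dᗮ ⊓ B : Submodule ℂ H) ≠ ⊥ := by
        intro h
        rw [h] at hEpos
        simp at hEpos
      obtain ⟨c, hcE, hc1⟩ := aux_line _ hEne
      have hcB : c ≤ B := le_trans hcE inf_le_right
      have hcD : c ⟂ D := Submodule.isOrtho_iff_le.mpr (le_trans hcE inf_le_left)
      have hcDdisj : c ⊓ D = ⊥ := by
        rw [Submodule.eq_bot_iff]
        intro x hx
        have h1 : x ∈ Dᗮ := le_trans hcE inf_le_left hx.1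
        exact (Submodule.mem_bot ℂ).mp
          ((D.orthogonal_disjoint.symm.eq_bot ▸
            (Submodule.mem_inf.mpr ⟨h1, hx.2⟩ : x ∈ Dᗮ ⊓ D)))
      -- A' := D ⊔ c
      have hA'rk : finrank ℂ (D ⊔ c : Submodule ℂ H) = finrank ℂ D + 1 :=
        aux_sup_line D c hc1 hcDdisj
      have hle1 : le A (D ⊔ c) := by
        have hDa : D ⟂ a := Submodule.isOrtho_iff_le.mpr inf_le_left
        have := L5 D a c ha1 hc1 hDa hcD.symm
        rwa [sup_comm D a, hADsup] at this
      -- the new intersection is strictly bigger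
      have hsubint : (A ⊓ B) ⊔ c ≤ (D ⊔ c) ⊓ B :=
        sup_le (le_inf (le_trans hABD le_sup_left) inf_le_right)
          (le_inf le_sup_right hcB)
      have hcABdisj : c ⊓ (A ⊓ B) = ⊥ := by
        rw [Submodule.eq_bot_iff]
        intro x hx
        have : x ∈ c ⊓ D := Submodule.mem_inf.mpr ⟨hx.1, hABD hx.2⟩
        rw [hcDdisj] at this
        exact (Submodule.mem_bot ℂ).mp this
      have hintrk : finrank ℂ ((A ⊓ B) ⊔ c : Submodule ℂ H) =
          finrank ℂ (A ⊓ B : Submodule ℂ H) + 1 := aux_sup_line _ c hc1 hcABdisj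
      have hint_le : finrank ℂ (A ⊓ B : Submodule ℂ H) + 1 ≤
          finrank ℂ ((D ⊔ c) ⊓ B : Submodule ℂ H) := by
        rw [← hintrk]
        exact Submodule.finrank_mono hsubint
      have hle2 : le (D ⊔ c) B := by
        apply ih (D ⊔ c) B (by omega) (by omega)
      exact htrans _ _ _ hle1 hle2
  -- L7 : dimension monotonicity gives le
  have L7 : ∀ (d : ℕ) (A B : Submodule ℂ H), finrank ℂ A ≤ finrank ℂ B →
      finrank ℂ B - finrank ℂ A ≤ d → le A B := by
    intro d
    induction d with
    | zero =>
      intro A B hle hd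
      exact L6 (finrank ℂ A) A B (by omega) (Nat.sub_le _ _)
    | succ d ih =>
      intro A B hle hd
      rcases eq_or_lt_of_le hle with heq | hlt
      · exact L6 (finrank ℂ A) A B heq (Nat.sub_le _ _)
      have hBne : B ≠ ⊥ := by
        intro h
        rw [h, finrank_bot] at hlt
        omega
      obtain ⟨ℓ, hℓB, hℓ1⟩ := aux_line B hBne
      have hrk : finrank ℂ ℓ + finrank ℂ (ℓᗮ ⊓ B : Submodule ℂ H) = finrank ℂ B :=
        Submodule.finrank_add_inf_finrank_orthogonal hℓB
      have h1 : le A (ℓᗮ ⊓ B) := ih A _ (by omega) (by omega)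
      exact htrans _ _ _ h1 (L3 _ B inf_le_right)
  -- L8 : strictly bigger dimension is strictly above
  have L8 : ∀ A B : Submodule ℂ H, finrank ℂ B < finrank ℂ A → ¬ le A B := by
    intro A B hlt hle
    obtain ⟨A', hA'le, hA'rk⟩ := aux_exists_sub (finrank ℂ B) A (le_of_lt hlt)
    have hne : A' ≠ A := fun h => by rw [h] at hA'rk; omega
    have h1 : le B A' := L6 (finrank ℂ B) B A' (by omega) (Nat.sub_le _ _)
    exact L4 A' A hA'le hne (htrans _ _ _ hle h1)
  -- conclude
  have hn : (0 : ℝ) < (finrank ℂ H : ℝ) := by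
    have h1 : finrank ℂ m ≤ finrank ℂ H := Submodule.finrank_le m
    have : 0 < finrank ℂ H := by omega
    exact_mod_cast this
  intro A B
  rw [div_le_div_iff_of_pos_right hn, Nat.cast_le]
  constructor
  · intro h
    by_contra hc
    exact L8 A B (by omega) h
  · intro h
    exact L7 (finrank ℂ B) A B h (Nat.sub_le _ _)
end

section
/- Let H be a finite-dimensional Hilbert space, p a unit vector, E = (span p)^⊥, and ⪯ a weak order on subspaces satisfying the standard assumptions with span{p} ∼ H. Then for any subspace A: A ∼ A₁, where A₁ is the span of the orthogonal projection Π_A(p) of p onto A (with A₁ = {0} if Π_A(p) = 0). -/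
/-- under the standard assumptions, if span{p} ∼ H then every
subspace A is equivalent to the span of the projection of p onto A. -/
theorem stmt15 {H : Type*} [NormedAddCommGroup H] [InnerProductSpace ℝ H]
    [FiniteDimensional ℝ H] (p : H) (hp : ‖p‖ = 1)
    (le : Submodule ℝ H → Submodule ℝ H → Prop)
    (hrefl : ∀ A, le A A)
    (htrans : ∀ A B C, le A B → le B C → le A C)
    (htotal : ∀ A B, le A B ∨ le B A)
    (hdeFinetti : ∀ A B C : Submodule ℝ H, C ⟂ A → C ⟂ B →
      (le A B ↔ le (A ⊔ C) (B ⊔ C)))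
    (hneg : ∀ A B : Submodule ℝ H, le A B → le Bᗮ Aᗮ)
    (hmono : ∀ A : Submodule ℝ H, le ⊥ A)
    (hpH : le (Submodule.span ℝ {p}) ⊤ ∧ le ⊤ (Submodule.span ℝ {p})) :
    ∀ A : Submodule ℝ H,
      le A (Submodule.span ℝ {(Submodule.orthogonalProjectionOnto A p : H)}) ∧
      le (Submodule.span ℝ {(Submodule.orthogonalProjectionOnto A p : H)}) A := by
  set E := (Submodule.span ℝ {p})ᗮ with hE
  have hEbot : le E ⊥ := by
    have := hneg _ _ hpH.2
    rwa [Submodule.top_orthogonal_eq_bot] at this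
  -- every subspace of E is equivalent to ⊥
  have hsub : ∀ F : Submodule ℝ H, F ≤ E → le F ⊥ := by
    intro F hF
    set C := Fᗮ ⊓ E with hC
    have hFC : F ⊔ C = E := Submodule.sup_orthogonal_inf_of_hasOrthogonalProjection hF
    have h1 : C ⟂ F := Submodule.isOrtho_comm.mp (Submodule.le_orthogonal_orthogonal F |>.trans
      (Submodule.orthogonal_le inf_le_left))
    have h2 : C ⟂ (⊥ : Submodule ℝ H) := by
      simp [Submodule.IsOrtho]
    have := (hdeFinetti F ⊥ C h1 h2).mpr
    rw [hFC, bot_sup_eq] at this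
    exact this (htrans _ _ _ hEbot (hmono C))
  intro A
  set q : H := (Submodule.orthogonalProjectionOnto A p : H) with hq
  set A₁ := Submodule.span ℝ {q} with hA₁
  have hA₁A : A₁ ≤ A := by
    rw [Submodule.span_le, Set.singleton_subset_iff]
    exact (Submodule.orthogonalProjectionOnto A p).2
  set B := A₁ᗮ ⊓ A with hB
  have hBA : A₁ ⊔ B = A := Submodule.sup_orthogonal_inf_of_hasOrthogonalProjection hA₁A
  -- B ≤ E
  have hBE : B ≤ E := by
    rintro x ⟨hx1, hx2⟩
    rw [hE, Submodule.mem_orthogonal]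
    intro u hu
    rw [Submodule.mem_span_singleton] at hu
    obtain ⟨c, rfl⟩ := hu
    have hq0 : (inner ℝ q x : ℝ) = 0 := hx1 q (Submodule.mem_span_singleton_self q)
    have hperp : (inner ℝ (p - q) x : ℝ) = 0 := by
      have : p - q ∈ Aᗮ := Submodule.sub_starProjection_mem_orthogonal (K := A) p
      exact real_inner_comm x (p-q) ▸ (Submodule.mem_orthogonal A (p - q)).mp this x hx2
    have hpx : (inner ℝ p x : ℝ) = 0 := by
      have : (inner ℝ p x : ℝ) - inner ℝ q x = 0 := by rw [← inner_sub_left]; exact hperp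
      linarith [hq0]
    simp [inner_smul_left, hpx]
  have hBbot : le B ⊥ := hsub B hBE
  have h1 : A₁ ⟂ B := Submodule.isOrtho_comm.mp inf_le_left
  have h2 : A₁ ⟂ (⊥ : Submodule ℝ H) := by simp [Submodule.IsOrtho]
  have key := hdeFinetti B ⊥ A₁ h1 h2
  rw [sup_comm B A₁, hBA, bot_sup_eq] at key
  have key2 := hdeFinetti ⊥ B A₁ h2 h1
  rw [bot_sup_eq, sup_comm B A₁, hBA] at key2
  exact ⟨key.mp hBbot, key2.mp (hmono B)⟩
end

section
/- Let ⪯ be a weak order on subspaces of ℝ³ satisfying the standard assumptions, whose restriction to one-dimensional subspaces is continuous (the strict lower and upper contour sets of each line are open in the unit sphere). Let m be a ⪯-minimal line and M a ⪯-maximal line among one-dimensional subspaces, with m ≺ M. Suppose unit vectors u, v satisfy span u ∼ m and span v ∼ M, u ≠ ±v, and let u', v' be unit vectors in span{u,v} with u' ⊥ u, v' ⊥ v. Then span u' ∼ M and span v' ∼ m. -/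
open Submodule Module

local notation "E" => EuclideanSpace ℝ (Fin 3)

/-- In the plane spanned by `u, v`, if `a, b` are nonzero orthogonal vectors of the plane,
then the orthogonal complement of `span a` intersected with the plane is `span b`. -/
lemma aux_perp (u v a b : EuclideanSpace ℝ (Fin 3)) (ha : a ≠ 0) (hb : b ≠ 0)
    (hab : inner ℝ b a = (0 : ℝ))
    (haP : a ∈ Submodule.span ℝ {u, v}) (hbP : b ∈ Submodule.span ℝ {u, v}) :
    (Submodule.span ℝ {a})ᗮ ⊓ Submodule.span ℝ {u, v} = Submodule.span ℝ {b} := by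
  have hab' : inner ℝ a b = (0 : ℝ) := by rwa [real_inner_comm]
  have hind : LinearIndependent ℝ ![a, b] := by
    rw [LinearIndependent.pair_iff]
    intro s t hst
    have h1 : inner ℝ a (s • a + t • b) = (0 : ℝ) := by rw [hst, inner_zero_right]
    have h2 : inner ℝ b (s • a + t • b) = (0 : ℝ) := by rw [hst, inner_zero_right]
    rw [inner_add_right, real_inner_smul_right, real_inner_smul_right, hab',
      real_inner_self_eq_norm_sq] at h1
    rw [inner_add_right, real_inner_smul_right, real_inner_smul_right, hab,
      real_inner_self_eq_norm_sq] at h2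
    have hna : ‖a‖ ≠ 0 := by simpa using ha
    have hnb : ‖b‖ ≠ 0 := by simpa using hb
    have h1' : s * ‖a‖ ^ 2 = 0 := by linarith
    have h2' : t * ‖b‖ ^ 2 = 0 := by linarith
    constructor
    · rcases mul_eq_zero.1 h1' with h | h
      · exact h
      · exact absurd (pow_eq_zero_iff two_ne_zero |>.1 h) hna
    · rcases mul_eq_zero.1 h2' with h | h
      · exact h
      · exact absurd (pow_eq_zero_iff two_ne_zero |>.1 h) hnb
  have hrange : Set.range ![a, b] = {a, b} := by rw [Matrix.range_cons, Matrix.range_cons, Matrix.range_empty]; exact (Set.pair_comm b a ▸ by simp)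
  have hfr : finrank ℝ (Submodule.span ℝ ({a, b} : Set (EuclideanSpace ℝ (Fin 3)))) = 2 := by
    have := finrank_span_eq_card hind
    rwa [hrange, Fintype.card_fin] at this
  have hPle : Submodule.span ℝ ({a, b} : Set (EuclideanSpace ℝ (Fin 3))) ≤ Submodule.span ℝ {u, v} := by
    rw [Submodule.span_le]
    rintro x (rfl | rfl)
    · exact haP
    · simpa using hbP
  have hPcard : finrank ℝ (Submodule.span ℝ ({u, v} : Set (EuclideanSpace ℝ (Fin 3)))) ≤ 2 := by
    classical
    refine (finrank_span_le_card _).trans ?_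
    rw [Set.toFinset_insert, Set.toFinset_singleton]
    exact (Finset.card_insert_le _ _).trans (by simp)
  have hP : Submodule.span ℝ ({a, b} : Set (EuclideanSpace ℝ (Fin 3))) = Submodule.span ℝ {u, v} :=
    Submodule.eq_of_le_of_finrank_le hPle (by omega)
  apply le_antisymm
  · intro x hx
    rw [Submodule.mem_inf] at hx
    obtain ⟨hx1, hx2⟩ := hx
    rw [← hP, Submodule.mem_span_pair] at hx2
    obtain ⟨c, d, rfl⟩ := hx2
    have hax : inner ℝ a (c • a + d • b) = (0 : ℝ) := by
      exact hx1 a (Submodule.mem_span_singleton_self a)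
    rw [inner_add_right, real_inner_smul_right, real_inner_smul_right, hab',
      real_inner_self_eq_norm_sq] at hax
    have hc : c = 0 := by
      have hh : c * ‖a‖ ^ 2 = 0 := by linarith
      rcases mul_eq_zero.1 hh with h | h
      · exact h
      · exact absurd (pow_eq_zero_iff two_ne_zero |>.1 h) (by simpa using ha)
    rw [hc, zero_smul, zero_add]
    exact Submodule.smul_mem _ _ (Submodule.mem_span_singleton_self b)
  · rw [Submodule.span_le, Set.singleton_subset_iff]
    refine Submodule.mem_inf.2 ⟨?_, hbP⟩
    rw [Submodule.mem_orthogonal]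
    intro y hy
    rw [Submodule.mem_span_singleton] at hy
    obtain ⟨c, rfl⟩ := hy
    rw [real_inner_smul_left, real_inner_comm, hab, mul_zero]

/-- Claim `mMtags` of the paper: orthogonal complements within
the plane span{u,v} exchange a minimal and a maximal line. -/
theorem stmt16
    (le : Submodule ℝ (EuclideanSpace ℝ (Fin 3)) →
          Submodule ℝ (EuclideanSpace ℝ (Fin 3)) → Prop)
    (hrefl : ∀ A, le A A)
    (htrans : ∀ A B C, le A B → le B C → le A C)
    (htotal : ∀ A B, le A B ∨ le B A)
    (hdeFinetti : ∀ A B C, C ⟂ A → C ⟂ B → (le A B ↔ le (A ⊔ C) (B ⊔ C)))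
    (hneg : ∀ A B, le A B → le Bᗮ Aᗮ)
    (hmono : ∀ A, le ⊥ A)
    (hcont : ∀ v : EuclideanSpace ℝ (Fin 3), ‖v‖ = 1 →
      IsOpen {u : Metric.sphere (0 : EuclideanSpace ℝ (Fin 3)) 1 |
        le (Submodule.span ℝ {(u : EuclideanSpace ℝ (Fin 3))}) (Submodule.span ℝ {v}) ∧
        ¬ le (Submodule.span ℝ {v}) (Submodule.span ℝ {(u : EuclideanSpace ℝ (Fin 3))})} ∧
      IsOpen {u : Metric.sphere (0 : EuclideanSpace ℝ (Fin 3)) 1 |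
        le (Submodule.span ℝ {v}) (Submodule.span ℝ {(u : EuclideanSpace ℝ (Fin 3))}) ∧
        ¬ le (Submodule.span ℝ {(u : EuclideanSpace ℝ (Fin 3))}) (Submodule.span ℝ {v})})
    (m M : Submodule ℝ (EuclideanSpace ℝ (Fin 3)))
    (hm : Module.finrank ℝ m = 1) (hM : Module.finrank ℝ M = 1)
    (hmin : ∀ w : Submodule ℝ (EuclideanSpace ℝ (Fin 3)),
      Module.finrank ℝ w = 1 → le m w)
    (hmax : ∀ w : Submodule ℝ (EuclideanSpace ℝ (Fin 3)),
      Module.finrank ℝ w = 1 → le w M)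
    (hmM : le m M ∧ ¬ le M m)
    (u v u' v' : EuclideanSpace ℝ (Fin 3))
    (hu : ‖u‖ = 1) (hv : ‖v‖ = 1) (hu' : ‖u'‖ = 1) (hv' : ‖v'‖ = 1)
    (hum : le (Submodule.span ℝ {u}) m ∧ le m (Submodule.span ℝ {u}))
    (hvM : le (Submodule.span ℝ {v}) M ∧ le M (Submodule.span ℝ {v}))
    (hne : u ≠ v ∧ u ≠ -v)
    (hu'mem : u' ∈ Submodule.span ℝ {u, v}) (hv'mem : v' ∈ Submodule.span ℝ {u, v})
    (hu'u : inner ℝ u' u = (0 : ℝ)) (hv'v : inner ℝ v' v = (0 : ℝ)) :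
    (le (Submodule.span ℝ {u'}) M ∧ le M (Submodule.span ℝ {u'})) ∧
    (le (Submodule.span ℝ {v'}) m ∧ le m (Submodule.span ℝ {v'})) := by
  have hu0 : u ≠ 0 := fun h => by simp [h] at hu
  have hv0 : v ≠ 0 := fun h => by simp [h] at hv
  have hu'0 : u' ≠ 0 := fun h => by simp [h] at hu'
  have hv'0 : v' ≠ 0 := fun h => by simp [h] at hv'
  set P : Submodule ℝ (EuclideanSpace ℝ (Fin 3)) := Submodule.span ℝ {u, v} with hPdef
  have humem : u ∈ P := Submodule.subset_span (by simp)
  have hvmem : v ∈ P := Submodule.subset_span (by simp)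
  -- characterizations of in-plane orthocomplements
  have h1 : (Submodule.span ℝ {u})ᗮ ⊓ P = Submodule.span ℝ {u'} :=
    aux_perp u v u u' hu0 hu'0 hu'u humem hu'mem
  have h1' : (Submodule.span ℝ {u'})ᗮ ⊓ P = Submodule.span ℝ {u} :=
    aux_perp u v u' u hu'0 hu0 (by rwa [real_inner_comm]) hu'mem humem
  have h2 : (Submodule.span ℝ {v})ᗮ ⊓ P = Submodule.span ℝ {v'} :=
    aux_perp u v v v' hv0 hv'0 hv'v hvmem hv'mem
  have h2' : (Submodule.span ℝ {v'})ᗮ ⊓ P = Submodule.span ℝ {v} :=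
    aux_perp u v v' v hv'0 hv0 (by rwa [real_inner_comm]) hv'mem hvmem
  -- duality within the plane P
  have dual : ∀ A B : Submodule ℝ (EuclideanSpace ℝ (Fin 3)), A ≤ P → B ≤ P →
      le A B → le (Bᗮ ⊓ P) (Aᗮ ⊓ P) := by
    intro A B hA hB hAB
    have hCA : Pᗮ ⟂ A := (Submodule.isOrtho_iff_le).2 (Submodule.orthogonal_le hA)
    have hCB : Pᗮ ⟂ B := (Submodule.isOrtho_iff_le).2 (Submodule.orthogonal_le hB)
    have hd := (hdeFinetti A B Pᗮ hCA hCB).1 hAB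
    have hn := hneg _ _ hd
    have e1 : (A ⊔ Pᗮ)ᗮ = Aᗮ ⊓ P := by
      rw [← Submodule.inf_orthogonal, Submodule.orthogonal_orthogonal]
    have e2 : (B ⊔ Pᗮ)ᗮ = Bᗮ ⊓ P := by
      rw [← Submodule.inf_orthogonal, Submodule.orthogonal_orthogonal]
    rwa [e1, e2] at hn
  have hule : Submodule.span ℝ {u} ≤ P := Submodule.span_le.2 (by simpa using humem)
  have hvle : Submodule.span ℝ {v} ≤ P := Submodule.span_le.2 (by simpa using hvmem)
  have hu'le : Submodule.span ℝ {u'} ≤ P := Submodule.span_le.2 (by simpa using hu'mem)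
  have hv'le : Submodule.span ℝ {v'} ≤ P := Submodule.span_le.2 (by simpa using hv'mem)
  have fru' : Module.finrank ℝ (Submodule.span ℝ {u'}) = 1 := finrank_span_singleton hu'0
  have frv' : Module.finrank ℝ (Submodule.span ℝ {v'}) = 1 := finrank_span_singleton hv'0
  -- span u ⪯ span v', hence dually span v ⪯ span u', hence M ⪯ span u'
  have step1 : le (Submodule.span ℝ {u}) (Submodule.span ℝ {v'}) :=
    htrans _ _ _ hum.1 (hmin _ frv')
  have step2 : le (Submodule.span ℝ {v}) (Submodule.span ℝ {u'}) := by
    have := dual _ _ hule hv'le step1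
    rwa [h1, h2'] at this
  have hMu' : le M (Submodule.span ℝ {u'}) := htrans _ _ _ hvM.2 step2
  have hu'M : le (Submodule.span ℝ {u'}) M := hmax _ fru'
  -- span u' ⪯ span v, hence dually span v' ⪯ span u, hence span v' ⪯ m
  have step3 : le (Submodule.span ℝ {u'}) (Submodule.span ℝ {v}) :=
    htrans _ _ _ hu'M hvM.2
  have step4 : le (Submodule.span ℝ {v'}) (Submodule.span ℝ {u}) := by
    have := dual _ _ hu'le hvle step3
    rwa [h1', h2] at this
  exact ⟨⟨hu'M, hMu'⟩, ⟨htrans _ _ _ step4 hum.1, hmin _ frv'⟩⟩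
end
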